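/- arXiv:1310.1112 — 3 statements merged into one kernel-verified Lean document; each statement's English description precedes it below -/
import Mathlib

section
/- Let G be a simple graph admitting a partition V1, V2, V3 of its vertex set such that (i) V1 is an independent set and V2 is a clique; (ii) every vertex of V3 is adjacent to every vertex of V2 and to no vertex of V1; and (iii) G[V3] is a split graph, or has fewer than six vertices, or is isomorphic to one of U, the complement of U, K_2 + K_{1,m}, or (K_m + K_1) ∨ 2K_1 for some m ≥ 3. Then G contains no (3,3)-blossom. -/
open Finset

/-- The polytope `P(d)` of fractional realizations: symmetric arrays with zero
diagonal, off-diagonal entries in `[0,1]`, whose row sums equal the degrees. -/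
def degreePolytope {n : ℕ} (d : Fin n → ℕ) : Set (Fin n → Fin n → ℝ) :=
  {x | (∀ i j, x i j = x j i) ∧ (∀ i, x i i = 0) ∧
       (∀ i j, 0 ≤ x i j ∧ x i j ≤ 1) ∧
       (∀ j, ∑ i, x i j = d j)}

/-- `G` is a realization of the degree list `d`. -/
def IsRealization {n : ℕ} (d : Fin n → ℕ) (G : SimpleGraph (Fin n)) : Prop :=
  ∀ i, {j | G.Adj i j}.ncard = d i

/-- `d` is graphic: it is the degree sequence of a simple graph. -/
def Graphic {n : ℕ} (d : Fin n → ℕ) : Prop :=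
  ∃ G : SimpleGraph (Fin n), IsRealization d G

/-- `d` is decisive: every extreme point of `P(d)` has all coordinates in `{0,1}`. -/
def Decisive {n : ℕ} (d : Fin n → ℕ) : Prop :=
  ∀ x ∈ Set.extremePoints ℝ (degreePolytope d), ∀ i j, x i j = 0 ∨ x i j = 1

/-- The graph whose edges are the pairs with nonintegral label. -/
def nonIntegralGraph {n : ℕ} (h : Fin n → Fin n → ℝ) : SimpleGraph (Fin n) :=
  SimpleGraph.fromRel fun i j => h i j ∉ ({0, 1} : Set ℝ)

/-- A `(3,3)`-blossom in `G`. -/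
def Has33Blossom {V : Type*} (G : SimpleGraph V) : Prop :=
  ∃ v1 v2 v3 w1 w2 w3 : V,
    [v1, v2, v3, w1, w2, w3].Pairwise (· ≠ ·) ∧
    ((G.Adj v1 v2 ∧ ¬G.Adj v2 v3 ∧ G.Adj v3 v1 ∧ ¬G.Adj v1 w1 ∧
      G.Adj w1 w2 ∧ ¬G.Adj w2 w3 ∧ G.Adj w3 w1) ∨
     (¬G.Adj v1 v2 ∧ G.Adj v2 v3 ∧ ¬G.Adj v3 v1 ∧ G.Adj v1 w1 ∧
      ¬G.Adj w1 w2 ∧ G.Adj w2 w3 ∧ ¬G.Adj w3 w1))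

/-- A `(k,ℓ)`-blossom in `G`: cycles `v`, `w` with connecting pair `v 0, w 0`,
with the `k + ℓ + 1` pairs alternately edges and non-edges (phase `b`). -/
def HasKLBlossom {V : Type*} (G : SimpleGraph V) (k l : ℕ) : Prop :=
  ∃ (v : ZMod k → V) (w : ZMod l → V) (b : Bool),
    Function.Injective (Sum.elim v w) ∧
    (∀ i : ZMod k, G.Adj (v i) (v (i + 1)) ↔ (Even i.val ↔ b = true)) ∧
    (G.Adj (v 0) (w 0) ↔ b = false) ∧
    (∀ i : ZMod l, G.Adj (w i) (w (i + 1)) ↔ (Even i.val ↔ b = true))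

/-- The 24 forbidden degree multisets of the family `B`. -/
def BDegSeqs : Set (Multiset ℕ) :=
  {{1,1,1,1,1,1}, {2,2,1,1,1,1}, {2,2,2,2,1,1}, {2,2,2,2,2,2},
   {3,2,2,1,1,1}, {3,2,2,2,2,1}, {3,3,2,2,1,1}, {3,3,2,2,2,2},
   {3,3,3,2,2,1}, {3,3,3,3,1,1}, {3,3,3,3,2,2}, {3,3,3,3,3,3},
   {4,2,2,2,1,1}, {4,3,2,2,2,1}, {4,3,3,2,2,2}, {4,3,3,3,2,1},
   {4,3,3,3,3,2}, {4,4,2,2,2,2}, {4,4,3,3,2,2}, {4,4,3,3,3,1},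
   {4,4,3,3,3,3}, {4,4,4,3,3,2}, {4,4,4,4,3,3}, {4,4,4,4,4,4}}

/-- `G` is `B`-free: no six vertices induce a subgraph whose degree multiset is
one of the 24 forbidden degree sequences (equivalently, no induced subgraph is
isomorphic to a member of `B`, since `B` consists of all realizations of them). -/
def BFree {V : Type*} (G : SimpleGraph V) : Prop :=
  ∀ s : Finset V, s.card = 6 →
    (s.val.map fun v => {u | u ∈ s ∧ G.Adj v u}.ncard) ∉ BDegSeqs

/-- `A` is an independent set in `G`. -/
def IndepOn {V : Type*} (G : SimpleGraph V) (A : Set V) : Prop :=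
  ∀ a ∈ A, ∀ b ∈ A, ¬G.Adj a b

/-- `B` is a clique in `G`. -/
def CliqueOn {V : Type*} (G : SimpleGraph V) (B : Set V) : Prop :=
  ∀ a ∈ B, ∀ b ∈ B, a ≠ b → G.Adj a b

/-- `G` is a split graph. -/
def IsSplit {V : Type*} (G : SimpleGraph V) : Prop :=
  ∃ A B : Set V, A ∪ B = Set.univ ∧ Disjoint A B ∧ IndepOn G A ∧ CliqueOn G B

/-- Partition of the vertices into an independent set `V1`, a clique `V2`, and a set
`V3` each of whose vertices is adjacent to all of `V2` and none of `V1`. -/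
def GoodPartition {V : Type*} (G : SimpleGraph V) (V1 V2 V3 : Set V) : Prop :=
  V1 ∪ V2 ∪ V3 = Set.univ ∧ Disjoint V1 V2 ∧ Disjoint V1 V3 ∧ Disjoint V2 V3 ∧
  IndepOn G V1 ∧ CliqueOn G V2 ∧
  (∀ v ∈ V3, ∀ u ∈ V2, G.Adj v u) ∧ (∀ v ∈ V3, ∀ u ∈ V1, ¬G.Adj v u)

/-- `G` is decomposable. -/
def Decomposable {V : Type*} (G : SimpleGraph V) : Prop :=
  ∃ V1 V2 V3 : Set V, GoodPartition G V1 V2 V3 ∧ (V1 ∪ V2).Nonempty ∧ V3.Nonempty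

def Indecomposable {V : Type*} (G : SimpleGraph V) : Prop := ¬Decomposable G

/-- The graph `U`, the unique realization of `(4,2,2,2,2,2)`:
vertices `u=0, a=1, b=2, c=3, d=4, e=5`, edges `ua, ub, uc, ud, ea, eb, cd`. -/
def graphU : SimpleGraph (Fin 6) :=
  SimpleGraph.fromRel fun i j =>
    (i, j) ∈ [((0 : Fin 6), (1 : Fin 6)), (0,2), (0,3), (0,4), (5,1), (5,2), (3,4)]

/-- `K_2 + K_{1,m}`: disjoint union of an edge and a star with `m` leaves
(star center `Sum.inr 0`). -/
def graphK2PlusStar (m : ℕ) : SimpleGraph (Fin 2 ⊕ Fin (m + 1)) :=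
  SimpleGraph.fromRel fun x y =>
    (x = Sum.inl 0 ∧ y = Sum.inl 1) ∨
    (x = Sum.inr 0 ∧ ∃ j : Fin (m + 1), j ≠ 0 ∧ y = Sum.inr j)

/-- `(K_m + K_1) ∨ 2K_1`: the join of (`K_m` plus an isolated vertex)
with two nonadjacent vertices. -/
def graphKmK1Join (m : ℕ) : SimpleGraph (Fin (m + 1) ⊕ Fin 2) :=
  SimpleGraph.fromRel fun x y =>
    (∃ i j : Fin (m + 1), (i : ℕ) < m ∧ (j : ℕ) < m ∧ i ≠ j ∧
      x = Sum.inl i ∧ y = Sum.inl j) ∨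
    (∃ i : Fin (m + 1), ∃ j : Fin 2, x = Sum.inl i ∧ y = Sum.inr j)

/-- The 5-cycle `C_5`. -/
def graphC5 : SimpleGraph (Fin 5) :=
  SimpleGraph.fromRel fun i j =>
    (i, j) ∈ [((0 : Fin 5), (1 : Fin 5)), (1,2), (2,3), (3,4), (4,0)]

/-- The path `P_5` on five vertices. -/
def graphP5 : SimpleGraph (Fin 5) :=
  SimpleGraph.fromRel fun i j =>
    (i, j) ∈ [((0 : Fin 5), (1 : Fin 5)), (1,2), (2,3), (3,4)]

/-- The house graph: the complement of `P_5`. -/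
def graphHouse : SimpleGraph (Fin 5) := graphP5ᶜ

/-- `K_2 + K_3`: disjoint union of an edge and a triangle. -/
def graphK2PlusK3 : SimpleGraph (Fin 5) :=
  SimpleGraph.fromRel fun i j =>
    (i, j) ∈ [((0 : Fin 5), (1 : Fin 5)), (2,3), (3,4), (4,2)]

/-- The complete bipartite graph `K_{2,3}` with parts `{0,1}` and `{2,3,4}`. -/
def graphK23 : SimpleGraph (Fin 5) :=
  SimpleGraph.fromRel fun i j =>
    (i, j) ∈ [((0 : Fin 5), (2 : Fin 5)), (0,3), (0,4), (1,2), (1,3), (1,4)]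

/-- Condition (iii) of the structure theorem for the part `V3`. -/
def SpecialPart {V : Type*} (G : SimpleGraph V) (V3 : Set V) : Prop :=
  IsSplit (G.induce V3) ∨ V3.ncard < 6 ∨
  Nonempty (G.induce V3 ≃g graphU) ∨ Nonempty (G.induce V3 ≃g graphUᶜ) ∨
  (∃ m, 3 ≤ m ∧ Nonempty (G.induce V3 ≃g graphK2PlusStar m)) ∨
  (∃ m, 3 ≤ m ∧ Nonempty (G.induce V3 ≃g graphKmK1Join m))

/-- The structure described in Theorem 4(4). -/
def HasGoodStructure {V : Type*} (G : SimpleGraph V) : Prop :=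
  ∃ V1 V2 V3 : Set V, GoodPartition G V1 V2 V3 ∧ SpecialPart G V3


section Auxiliary

lemma pairwise6 {α : Type*} {a b c d e f : α} (h : [a,b,c,d,e,f].Pairwise (· ≠ ·)) :
    (a≠b ∧ a≠c ∧ a≠d ∧ a≠e ∧ a≠f) ∧ (b≠c ∧ b≠d ∧ b≠e ∧ b≠f) ∧ (c≠d ∧ c≠e ∧ c≠f) ∧
    (d≠e ∧ d≠f) ∧ e≠f := by
  simp only [List.pairwise_cons] at h
  obtain ⟨h1, h2, h3, h4, h5, -⟩ := h
  exact ⟨⟨h1 _ (by simp), h1 _ (by simp), h1 _ (by simp), h1 _ (by simp), h1 _ (by simp)⟩,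
    ⟨h2 _ (by simp), h2 _ (by simp), h2 _ (by simp), h2 _ (by simp)⟩,
    ⟨h3 _ (by simp), h3 _ (by simp), h3 _ (by simp)⟩,
    ⟨h4 _ (by simp), h4 _ (by simp)⟩, h5 _ (by simp)⟩

lemma blossom_compl {V : Type*} {G : SimpleGraph V} (h : Has33Blossom Gᶜ) : Has33Blossom G := by
  obtain ⟨v1, v2, v3, w1, w2, w3, hpw, hc⟩ := h
  obtain ⟨⟨n12, n13, n14, n15, n16⟩, ⟨n23, n24, n25, n26⟩, ⟨n34, n35, n36⟩, ⟨n45, n46⟩, n56⟩ :=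
    pairwise6 hpw
  refine ⟨v1, v2, v3, w1, w2, w3, hpw, ?_⟩
  simp only [SimpleGraph.compl_adj] at hc
  rcases hc with ⟨h1, h2, h3, h4, h5, h6, h7⟩ | ⟨h1, h2, h3, h4, h5, h6, h7⟩
  · exact Or.inr ⟨h1.2, by_contra fun hx => h2 ⟨n23, hx⟩, h3.2,
      by_contra fun hx => h4 ⟨n14, hx⟩, h5.2, by_contra fun hx => h6 ⟨n56, hx⟩, h7.2⟩
  · exact Or.inl ⟨by_contra fun hx => h1 ⟨n12, hx⟩, h2.2, by_contra fun hx => h3 ⟨n13.symm, hx⟩,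
      h4.2, by_contra fun hx => h5 ⟨n45, hx⟩, h6.2, by_contra fun hx => h7 ⟨n46.symm, hx⟩⟩

lemma blossom_map {V W : Type*} {G : SimpleGraph V} {H : SimpleGraph W} (e : G ≃g H)
    (h : Has33Blossom G) : Has33Blossom H := by
  obtain ⟨v1, v2, v3, w1, w2, w3, hpw, hc⟩ := h
  refine ⟨e v1, e v2, e v3, e w1, e w2, e w3, ?_, ?_⟩
  · have : [e v1, e v2, e v3, e w1, e w2, e w3] = List.map e [v1,v2,v3,w1,w2,w3] := by simp
    rw [this, List.pairwise_map]
    exact hpw.imp fun h => (e.toEquiv.injective.ne_iff).2 h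
  · simp only [SimpleGraph.Iso.map_adj_iff]
    exact hc

lemma split_no_blossom {V : Type*} {G : SimpleGraph V} (h : IsSplit G) : ¬Has33Blossom G := by
  rintro ⟨v1, v2, v3, w1, w2, w3, hpw, hc⟩
  obtain ⟨A, B, hcov, hdis, hA, hB⟩ := h
  obtain ⟨⟨n12, n13, n14, n15, n16⟩, ⟨n23, n24, n25, n26⟩, ⟨n34, n35, n36⟩, ⟨n45, n46⟩, n56⟩ :=
    pairwise6 hpw
  have mem : ∀ x : V, x ∈ A ∨ x ∈ B := fun x => by
    have : x ∈ A ∪ B := by rw [hcov]; trivial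
    exact this
  rcases hc with ⟨h1, h2, h3, h4, h5, h6, h7⟩ | ⟨h1, h2, h3, h4, h5, h6, h7⟩
  · have key : ∀ x y z : V, G.Adj x y → G.Adj x z → ¬G.Adj y z → y ≠ z → x ∈ B := by
      intro x y z hxy hxz hyz hne
      rcases mem x with hx | hx
      · rcases mem y with hy | hy
        · exact absurd hxy (hA x hx y hy)
        · rcases mem z with hz | hz
          · exact absurd hxz (hA x hx z hz)
          · exact absurd (hB y hy z hz hne) hyz
      · exact hx
    have hv1 : v1 ∈ B := key v1 v2 v3 h1 h3.symm h2 n23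
    have hw1 : w1 ∈ B := key w1 w2 w3 h5 h7.symm h6 n56
    exact h4 (hB v1 hv1 w1 hw1 n14)
  · have key : ∀ x y z : V, ¬G.Adj x y → ¬G.Adj x z → G.Adj y z → x ≠ y → x ≠ z → x ∈ A := by
      intro x y z hxy hxz hyz hne1 hne2
      rcases mem x with hx | hx
      · exact hx
      · rcases mem y with hy | hy
        · rcases mem z with hz | hz
          · exact absurd hyz (hA y hy z hz)
          · exact absurd (hB x hx z hz hne2) hxz
        · exact absurd (hB x hx y hy hne1) hxy
    have hv1 : v1 ∈ A := key v1 v2 v3 h1 (fun hh => h3 hh.symm) h2 n12 n13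
    have hw1 : w1 ∈ A := key w1 w2 w3 h5 (fun hh => h7 hh.symm) h6 n45 n46
    exact hA v1 hv1 w1 hw1 h4

instance : DecidableRel graphU.Adj := fun a b =>
  inferInstanceAs (Decidable (a ≠ b ∧ _))

/-- Boolean adjacency for `graphU`. -/
def adjUB (i j : Fin 6) : Bool :=
  [1, 2, 3, 4, 51, 52, 34].contains (i.val * 10 + j.val) ||
  [1, 2, 3, 4, 51, 52, 34].contains (j.val * 10 + i.val)

lemma adjU_iff : ∀ i j : Fin 6, graphU.Adj i j ↔ adjUB i j = true := by decide
lemma adjUB_symm : ∀ i j : Fin 6, adjUB i j = adjUB j i := by decide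

lemma UA1 : ∀ x y z : Fin 6, y ≠ z → adjUB x y = true → adjUB x z = true →
    ¬adjUB y z = true → (x = 0 ∨ x = 1 ∨ x = 2 ∨ x = 5) := by decide

lemma UA2 : ∀ x y : Fin 6, (x = 0 ∨ x = 1 ∨ x = 2 ∨ x = 5) → (y = 0 ∨ y = 1 ∨ y = 2 ∨ y = 5) →
    x ≠ y → ¬adjUB x y = true →
    ((x = 0 ∧ y = 5) ∨ (x = 5 ∧ y = 0) ∨ (x = 1 ∧ y = 2) ∨ (x = 2 ∧ y = 1)) := by decide

lemma UA3a : ∀ v2 v3 w2 w3 : Fin 6, (v2 ≠ v3 ∧ w2 ≠ w3 ∧ v2 ≠ w2 ∧ v2 ≠ w3 ∧ v3 ≠ w2 ∧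
    v3 ≠ w3 ∧ v2 ≠ 0 ∧ v3 ≠ 0 ∧ w2 ≠ 0 ∧ w3 ≠ 0 ∧ v2 ≠ 5 ∧ v3 ≠ 5 ∧ w2 ≠ 5 ∧ w3 ≠ 5 ∧
    adjUB 0 v2 = true ∧ adjUB 0 v3 = true ∧ ¬adjUB v2 v3 = true ∧
    adjUB 5 w2 = true ∧ adjUB 5 w3 = true ∧ ¬adjUB w2 w3 = true) → False := by decide

lemma UA3b : ∀ v2 v3 w2 w3 : Fin 6, (v2 ≠ v3 ∧ w2 ≠ w3 ∧ v2 ≠ w2 ∧ v2 ≠ w3 ∧ v3 ≠ w2 ∧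
    v3 ≠ w3 ∧ v2 ≠ 1 ∧ v3 ≠ 1 ∧ w2 ≠ 1 ∧ w3 ≠ 1 ∧ v2 ≠ 2 ∧ v3 ≠ 2 ∧ w2 ≠ 2 ∧ w3 ≠ 2 ∧
    adjUB 1 v2 = true ∧ adjUB 1 v3 = true ∧ ¬adjUB v2 v3 = true ∧
    adjUB 2 w2 = true ∧ adjUB 2 w3 = true ∧ ¬adjUB w2 w3 = true) → False := by decide

lemma UB1 : ∀ y z : Fin 6, y ≠ z → y ≠ 0 → z ≠ 0 → ¬adjUB 0 y = true → ¬adjUB 0 z = true →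
    False := by decide

lemma UB2 : ∀ x : Fin 6, x ≠ 0 → ¬adjUB x 0 = true → x = 5 := by decide

lemma UB3 : ∀ v3 w1 w2 w3 : Fin 6, (v3 ≠ w1 ∧ v3 ≠ w2 ∧ v3 ≠ w3 ∧ w1 ≠ w2 ∧ w1 ≠ w3 ∧
    w2 ≠ w3 ∧ v3 ≠ 0 ∧ w1 ≠ 0 ∧ w2 ≠ 0 ∧ w3 ≠ 0 ∧ v3 ≠ 5 ∧ w1 ≠ 5 ∧ w2 ≠ 5 ∧ w3 ≠ 5 ∧
    adjUB 0 v3 = true ∧ ¬adjUB v3 5 = true ∧ adjUB 5 w1 = true ∧ ¬adjUB w1 w2 = true ∧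
    adjUB w2 w3 = true ∧ ¬adjUB w3 w1 = true) → False := by decide

lemma six_cover {a b c d e f : Fin 6} (h : [a,b,c,d,e,f].Pairwise (· ≠ ·)) (x : Fin 6) :
    x = a ∨ x = b ∨ x = c ∨ x = d ∨ x = e ∨ x = f := by
  have hn : [a,b,c,d,e,f].Nodup := h
  have hc : ([a,b,c,d,e,f].toFinset).card = 6 := by
    rw [List.toFinset_card_of_nodup hn]; rfl
  have hu : [a,b,c,d,e,f].toFinset = Finset.univ :=
    Finset.eq_univ_of_card _ (by rw [hc]; rfl)
  have hx : x ∈ [a,b,c,d,e,f].toFinset := hu ▸ Finset.mem_univ x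
  simpa using hx

/-- Core of case B for `U`, with `v2 = 0` and the rest of the pattern. -/
lemma UB_core (v1 v3 w1 w2 w3 : Fin 6)
    (hv1 : v1 ≠ 0) (hv3 : v3 ≠ 0) (hw1 : w1 ≠ 0) (hw2 : w2 ≠ 0) (hw3 : w3 ≠ 0)
    (n13 : v1 ≠ v3) (n1w1 : v1 ≠ w1) (n1w2 : v1 ≠ w2) (n1w3 : v1 ≠ w3)
    (n3w1 : v3 ≠ w1) (n3w2 : v3 ≠ w2) (n3w3 : v3 ≠ w3)
    (nw12 : w1 ≠ w2) (nw13 : w1 ≠ w3) (nw23 : w2 ≠ w3)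
    (h1 : ¬adjUB v1 0 = true) (h2 : adjUB 0 v3 = true) (h3 : ¬adjUB v3 v1 = true)
    (h4 : adjUB v1 w1 = true) (h5 : ¬adjUB w1 w2 = true) (h6 : adjUB w2 w3 = true)
    (h7 : ¬adjUB w3 w1 = true) : False := by
  have hv15 : v1 = 5 := UB2 v1 hv1 h1
  subst hv15
  exact UB3 v3 w1 w2 w3 ⟨n3w1, n3w2, n3w3, nw12, nw13, nw23, hv3, hw1, hw2, hw3,
    n13.symm, n1w1.symm, n1w2.symm, n1w3.symm, h2, h3, h4, h5, h6, h7⟩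

lemma U_no_blossom : ¬Has33Blossom graphU := by
  rintro ⟨v1, v2, v3, w1, w2, w3, hpw, hc⟩
  obtain ⟨⟨n12, n13, n14, n15, n16⟩, ⟨n23, n24, n25, n26⟩, ⟨n34, n35, n36⟩, ⟨n45, n46⟩, n56⟩ :=
    pairwise6 hpw
  have cover := six_cover hpw
  simp only [adjU_iff] at hc
  rcases hc with ⟨h1, h2, h3, h4, h5, h6, h7⟩ | ⟨h1, h2, h3, h4, h5, h6, h7⟩
  · -- case A
    have hv : v1 = 0 ∨ v1 = 1 ∨ v1 = 2 ∨ v1 = 5 :=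
      UA1 v1 v2 v3 n23 h1 (by rwa [adjUB_symm] at h3) h2
    have hw : w1 = 0 ∨ w1 = 1 ∨ w1 = 2 ∨ w1 = 5 :=
      UA1 w1 w2 w3 n56 h5 (by rwa [adjUB_symm] at h7) h6
    have h30 : adjUB v1 v3 = true := by rwa [adjUB_symm] at h3
    have h70 : adjUB w1 w3 = true := by rwa [adjUB_symm] at h7
    rcases UA2 v1 w1 hv hw n14 h4 with ⟨e1, e2⟩ | ⟨e1, e2⟩ | ⟨e1, e2⟩ | ⟨e1, e2⟩ <;>
        subst e1 <;> subst e2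
    · exact UA3a v2 v3 w2 w3 ⟨n23, n56, n25, n26, n35, n36, n12.symm, n13.symm,
        n15.symm, n16.symm, n24, n34, n45.symm, n46.symm, h1, h30, h2, h5, h70, h6⟩
    · exact UA3a w2 w3 v2 v3 ⟨n56, n23, n25.symm, n35.symm, n26.symm, n36.symm,
        n45.symm, n46.symm, n24, n34, n15.symm, n16.symm, n12.symm, n13.symm,
        h5, h70, h6, h1, h30, h2⟩
    · exact UA3b v2 v3 w2 w3 ⟨n23, n56, n25, n26, n35, n36, n12.symm, n13.symm,
        n15.symm, n16.symm, n24, n34, n45.symm, n46.symm, h1, h30, h2, h5, h70, h6⟩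
    · exact UA3b w2 w3 v2 v3 ⟨n56, n23, n25.symm, n35.symm, n26.symm, n36.symm,
        n45.symm, n46.symm, n24, n34, n15.symm, n16.symm, n12.symm, n13.symm,
        h5, h70, h6, h1, h30, h2⟩
  · -- case B
    have hv10 : v1 ≠ 0 := by
      intro h; subst h
      exact UB1 v2 v3 n23 (fun h => n12 h.symm) (fun h => n13 h.symm) h1
        (by rwa [adjUB_symm] at h3)
    have hw10 : w1 ≠ 0 := by
      intro h; subst h
      exact UB1 w2 w3 n56 (fun h => n45 h.symm) (fun h => n46 h.symm) h5
        (by rwa [adjUB_symm] at h7)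
    rcases cover 0 with e | e | e | e | e | e
    · exact hv10 e.symm
    · subst e
      exact UB_core v1 v3 w1 w2 w3 hv10 n23.symm n24.symm n25.symm n26.symm
        n13 n14 n15 n16 n34 n35 n36 n45 n46 n56
        h1 h2 h3 h4 h5 h6 h7
    · subst e
      exact UB_core v1 v2 w1 w2 w3 hv10 n23 n34.symm n35.symm n36.symm
        n12 n14 n15 n16 n24 n25 n26 n45 n46 n56
        (by rwa [adjUB_symm] at h3) (by rwa [adjUB_symm] at h2)
        (fun hx => h1 (by rwa [adjUB_symm] at hx)) h4 h5 h6 h7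
    · exact hw10 e.symm
    · subst e
      exact UB_core w1 w3 v1 v2 v3 hw10 n56.symm n15 n25 n35
        n46 n14.symm n24.symm n34.symm n16.symm n26.symm n36.symm n12 n13 n23
        h5 h6 h7 (by rwa [adjUB_symm] at h4) h1 h2 h3
    · subst e
      exact UB_core w1 w2 v1 v2 v3 hw10 n56 n16 n26 n36
        n45 n14.symm n24.symm n34.symm n15.symm n25.symm n35.symm n12 n13 n23
        (fun hx => h7 (by rwa [adjUB_symm] at hx)) (by rwa [adjUB_symm] at h6)
        (fun hx => h5 (by rwa [adjUB_symm] at hx)) (by rwa [adjUB_symm] at h4) h1 h2 h3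

lemma fin2_split {a b : Fin 2} (h : a ≠ b) : (a = 0 ∧ b = 1) ∨ (a = 1 ∧ b = 0) := by
  fin_cases a <;> fin_cases b <;> simp_all

/-- In `K_2 + K_{1,m}`, a vertex with two distinct neighbours is the star centre. -/
lemma star_center {m : ℕ} {x y z : Fin 2 ⊕ Fin (m + 1)}
    (hxy : (graphK2PlusStar m).Adj x y) (hxz : (graphK2PlusStar m).Adj x z) (hyz : y ≠ z) :
    x = Sum.inr 0 := by
  rw [graphK2PlusStar, SimpleGraph.fromRel_adj] at hxy hxz
  obtain ⟨hne1, h1 | h1⟩ := hxy <;> obtain ⟨hne2, h2 | h2⟩ := hxz <;>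
    rcases h1 with ⟨hx1, hy1⟩ | ⟨hx1, j1, hj1, hy1⟩ <;>
    rcases h2 with ⟨hx2, hy2⟩ | ⟨hx2, j2, hj2, hy2⟩ <;> simp_all

/-- In `K_2 + K_{1,m}`, every edge uses `inl 0`, `inl 1` or the centre. -/
lemma star_edge {m : ℕ} {x y : Fin 2 ⊕ Fin (m + 1)} (h : (graphK2PlusStar m).Adj x y) :
    (x = Sum.inl 0 ∧ y = Sum.inl 1) ∨ (y = Sum.inl 0 ∧ x = Sum.inl 1) ∨
    x = Sum.inr 0 ∨ y = Sum.inr 0 := by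
  rw [graphK2PlusStar, SimpleGraph.fromRel_adj] at h
  obtain ⟨-, h | h⟩ := h <;> rcases h with ⟨hx, hy⟩ | ⟨hx, j, hj, hy⟩ <;> simp_all

lemma star_no_blossom (m : ℕ) : ¬Has33Blossom (graphK2PlusStar m) := by
  rintro ⟨v1, v2, v3, w1, w2, w3, hpw, hc⟩
  obtain ⟨⟨n12, n13, n14, n15, n16⟩, ⟨n23, n24, n25, n26⟩, ⟨n34, n35, n36⟩, ⟨n45, n46⟩, n56⟩ :=
    pairwise6 hpw
  clear hpw
  rcases hc with ⟨h1, h2, h3, h4, h5, h6, h7⟩ | ⟨h1, h2, h3, h4, h5, h6, h7⟩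
  · exact n14 ((star_center h1 h3.symm n23).trans (star_center h5 h7.symm n56).symm)
  · have e2 := star_edge h2
    have e6 := star_edge h6
    have e4 := star_edge h4
    clear h1 h2 h3 h4 h5 h6 h7
    rcases e2 with ⟨e1, e2⟩ | ⟨e1, e2⟩ | e | e <;>
    rcases e6 with ⟨f1, f2⟩ | ⟨f1, f2⟩ | f | f <;>
    rcases e4 with ⟨g1, g2⟩ | ⟨g1, g2⟩ | g | g <;> simp_all

/-- In `(K_m + K_1) ∨ 2K_1`, a non-edge between distinct vertices uses `inl (last)`
or is the `inr` pair. -/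
lemma join_nonedge {m : ℕ} {x y : Fin (m + 1) ⊕ Fin 2} (hne : x ≠ y)
    (h : ¬(graphKmK1Join m).Adj x y) :
    x = Sum.inl (Fin.last m) ∨ y = Sum.inl (Fin.last m) ∨
    (x = Sum.inr 0 ∧ y = Sum.inr 1) ∨ (x = Sum.inr 1 ∧ y = Sum.inr 0) := by
  rcases x with i | a <;> rcases y with j | b
  · by_cases hi : i = Fin.last m
    · exact Or.inl (by rw [hi])
    by_cases hj : j = Fin.last m
    · exact Or.inr (Or.inl (by rw [hj]))
    exfalso
    apply h
    rw [graphKmK1Join, SimpleGraph.fromRel_adj]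
    exact ⟨hne, Or.inl (Or.inl ⟨i, j, Fin.val_lt_last hi, Fin.val_lt_last hj,
      by simpa using hne, rfl, rfl⟩)⟩
  · exfalso
    apply h
    rw [graphKmK1Join, SimpleGraph.fromRel_adj]
    exact ⟨hne, Or.inl (Or.inr ⟨i, b, rfl, rfl⟩)⟩
  · exfalso
    apply h
    rw [graphKmK1Join, SimpleGraph.fromRel_adj]
    exact ⟨hne, Or.inr (Or.inr ⟨j, a, rfl, rfl⟩)⟩
  · have hab : a ≠ b := by simpa using hne
    rcases fin2_split hab with ⟨ha, hb⟩ | ⟨ha, hb⟩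
    · exact Or.inr (Or.inr (Or.inl ⟨by rw [ha], by rw [hb]⟩))
    · exact Or.inr (Or.inr (Or.inr ⟨by rw [ha], by rw [hb]⟩))

lemma join_no_blossom (m : ℕ) : ¬Has33Blossom (graphKmK1Join m) := by
  rintro ⟨v1, v2, v3, w1, w2, w3, hpw, hc⟩
  obtain ⟨⟨n12, n13, n14, n15, n16⟩, ⟨n23, n24, n25, n26⟩, ⟨n34, n35, n36⟩, ⟨n45, n46⟩, n56⟩ :=
    pairwise6 hpw
  clear hpw
  rcases hc with ⟨h1, h2, h3, h4, h5, h6, h7⟩ | ⟨h1, h2, h3, h4, h5, h6, h7⟩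
  · have e := join_nonedge n23 h2
    have f := join_nonedge n14 h4
    have g := join_nonedge n56 h6
    clear h1 h2 h3 h4 h5 h6 h7
    rcases e with e | e | ⟨e1, e2⟩ | ⟨e1, e2⟩ <;>
    rcases f with f | f | ⟨f1, f2⟩ | ⟨f1, f2⟩ <;>
    rcases g with g | g | ⟨g1, g2⟩ | ⟨g1, g2⟩ <;> simp_all
  · have e := join_nonedge n12 h1
    have f := join_nonedge n13 (fun h => h3 h.symm)
    have g := join_nonedge n45 h5
    have k := join_nonedge n46 (fun h => h7 h.symm)
    clear h1 h2 h3 h4 h5 h6 h7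
    rcases e with e | e | ⟨e1, e2⟩ | ⟨e1, e2⟩ <;>
    rcases f with f | f | ⟨f1, f2⟩ | ⟨f1, f2⟩ <;>
    rcases g with g | g | ⟨g1, g2⟩ | ⟨g1, g2⟩ <;>
    rcases k with k | k | ⟨k1, k2⟩ | ⟨k1, k2⟩ <;> simp_all

lemma six_le_ncard {V : Type*} [Fintype V] {s : Set V} (a b c d e f : s)
    (h : ([a,b,c,d,e,f] : List s).Pairwise (· ≠ ·)) : 6 ≤ s.ncard := by
  classical
  have hn : ([a,b,c,d,e,f] : List s).Nodup := h
  have hc : ([a,b,c,d,e,f].toFinset).card = 6 := by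
    rw [List.toFinset_card_of_nodup hn]; rfl
  have h1 : 6 ≤ Fintype.card s := hc ▸ Finset.card_le_univ _
  rwa [Set.ncard_eq_toFinset_card' s, Set.toFinset_card]

/-- Dispatching the special part condition against a blossom inside `V3`. -/
lemma dispatch {V : Type*} [Fintype V] (G : SimpleGraph V) (V3 : Set V)
    (hspec : SpecialPart G V3) (hb : Has33Blossom (G.induce V3)) : False := by
  rcases hspec with hsplit | hcard | he | he | ⟨m, -, he⟩ | ⟨m, -, he⟩
  · exact split_no_blossom hsplit hb
  · obtain ⟨a, b, c, d, e, f, hpw, -⟩ := hb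
    exact absurd (six_le_ncard a b c d e f hpw) (by omega)
  · obtain ⟨e⟩ := he
    exact U_no_blossom (blossom_map e hb)
  · obtain ⟨e⟩ := he
    exact U_no_blossom (blossom_compl (blossom_map e hb))
  · obtain ⟨e⟩ := he
    exact star_no_blossom m (blossom_map e hb)
  · obtain ⟨e⟩ := he
    exact join_no_blossom m (blossom_map e hb)

end Auxiliary

/-- a graph with the good structure contains no `(3,3)`-blossom. -/
theorem no_33blossom_of_good_structure {V : Type*} [Fintype V] (G : SimpleGraph V)
    (hG : HasGoodStructure G) : ¬Has33Blossom G := by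
  rintro ⟨v1, v2, v3, w1, w2, w3, hpw, hc⟩
  obtain ⟨V1, V2, V3, ⟨hcov, d12, d13, d23, hI, hC, h32, h31⟩, hspec⟩ := hG
  obtain ⟨⟨n12, n13, n14, n15, n16⟩, ⟨n23, n24, n25, n26⟩, ⟨n34, n35, n36⟩, ⟨n45, n46⟩, n56⟩ :=
    pairwise6 hpw
  have mem : ∀ x : V, x ∈ V1 ∨ x ∈ V2 ∨ x ∈ V3 := fun x => by
    have hx : x ∈ V1 ∪ V2 ∪ V3 := by rw [hcov]; trivial
    rcases hx with hx | hx
    · rcases hx with hx | hx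
      · exact Or.inl hx
      · exact Or.inr (Or.inl hx)
    · exact Or.inr (Or.inr hx)
  have adjV1 : ∀ x y : V, x ∈ V1 → G.Adj x y → y ∈ V2 := by
    intro x y hx hxy
    rcases mem y with hy | hy | hy
    · exact absurd hxy (hI x hx y hy)
    · exact hy
    · exact absurd hxy.symm (h31 y hy x hx)
  -- build a blossom inside the induced subgraph on V3
  have build : v1 ∈ V3 → v2 ∈ V3 → v3 ∈ V3 → w1 ∈ V3 → w2 ∈ V3 → w3 ∈ V3 → False := by
    intro m1 m2 m3 m4 m5 m6
    apply dispatch G V3 hspec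
    refine ⟨⟨v1, m1⟩, ⟨v2, m2⟩, ⟨v3, m3⟩, ⟨w1, m4⟩, ⟨w2, m5⟩, ⟨w3, m6⟩, ?_, ?_⟩
    · have hmap : ([⟨v1,m1⟩, ⟨v2,m2⟩, ⟨v3,m3⟩, ⟨w1,m4⟩, ⟨w2,m5⟩, ⟨w3,m6⟩] :
          List V3).map Subtype.val = [v1, v2, v3, w1, w2, w3] := by simp
      have h2 := List.pairwise_map (f := (Subtype.val : V3 → V))
        (l := [⟨v1,m1⟩, ⟨v2,m2⟩, ⟨v3,m3⟩, ⟨w1,m4⟩, ⟨w2,m5⟩, ⟨w3,m6⟩]) (R := (· ≠ ·))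
      rw [hmap] at h2
      exact (h2.mp hpw).imp fun hne => Subtype.coe_ne_coe.mp hne
    · simpa only [SimpleGraph.comap_adj, Function.Embedding.subtype_apply] using hc
  rcases hc with ⟨h1, h2, h3, h4, h5, h6, h7⟩ | ⟨h1, h2, h3, h4, h5, h6, h7⟩
  · -- Case A: cherries with centres v1, w1
    have centerNotV1 : ∀ x y z : V, G.Adj x y → G.Adj x z → ¬G.Adj y z → y ≠ z → x ∉ V1 := by
      intro x y z hxy hxz hyz hne hx
      exact hyz (hC y (adjV1 x y hx hxy) z (adjV1 x z hx hxz) hne)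
    have centersV3 : ∀ x x' : V, x ∉ V1 → x' ∉ V1 → ¬G.Adj x x' → x ≠ x' → x ∈ V3 := by
      intro x x' hx hx' hxx hne
      rcases mem x with h | h | h
      · exact absurd h hx
      · rcases mem x' with h' | h' | h'
        · exact absurd h' hx'
        · exact absurd (hC x h x' h' hne) hxx
        · exact absurd (h32 x' h' x h).symm hxx
      · exact h
    have leafV3 : ∀ x y z : V, x ∈ V3 → G.Adj x y → G.Adj x z → ¬G.Adj y z → y ≠ z →
        y ∈ V3 := by
      intro x y z hx hxy hxz hyz hne
      rcases mem y with hy | hy | hy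
      · exact absurd hxy (h31 x hx y hy)
      · rcases mem z with hz | hz | hz
        · exact absurd hxz (h31 x hx z hz)
        · exact absurd (hC y hy z hz hne) hyz
        · exact absurd (h32 z hz y hy).symm hyz
      · exact hy
    have v1n : v1 ∉ V1 := centerNotV1 v1 v2 v3 h1 h3.symm h2 n23
    have w1n : w1 ∉ V1 := centerNotV1 w1 w2 w3 h5 h7.symm h6 n56
    have m1 : v1 ∈ V3 := centersV3 v1 w1 v1n w1n h4 n14
    have m4 : w1 ∈ V3 := centersV3 w1 v1 w1n v1n (fun h => h4 h.symm) n14.symm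
    have m2 : v2 ∈ V3 := leafV3 v1 v2 v3 m1 h1 h3.symm h2 n23
    have m3 : v3 ∈ V3 := leafV3 v1 v3 v2 m1 h3.symm h1 (fun h => h2 h.symm) n23.symm
    have m5 : w2 ∈ V3 := leafV3 w1 w2 w3 m4 h5 h7.symm h6 n56
    have m6 : w3 ∈ V3 := leafV3 w1 w3 w2 m4 h7.symm h5 (fun h => h6 h.symm) n56.symm
    exact build m1 m2 m3 m4 m5 m6
  · -- Case B: anti-cherries with centres v1, w1
    have acNotV2 : ∀ x y z : V, ¬G.Adj x y → ¬G.Adj x z → G.Adj y z → x ≠ y → x ≠ z →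
        x ∉ V2 := by
      intro x y z hxy hxz hyz nxy nxz hx
      have hy : y ∈ V1 := by
        rcases mem y with h | h | h
        · exact h
        · exact absurd (hC x hx y h nxy) hxy
        · exact absurd (h32 y h x hx).symm hxy
      have hz : z ∈ V1 := by
        rcases mem z with h | h | h
        · exact h
        · exact absurd (hC x hx z h nxz) hxz
        · exact absurd (h32 z h x hx).symm hxz
      exact absurd hyz (hI y hy z hz)
    have v1n2 : v1 ∉ V2 := acNotV2 v1 v2 v3 h1 (fun h => h3 h.symm) h2 n12 n13
    have w1n2 : w1 ∉ V2 := acNotV2 w1 w2 w3 h5 (fun h => h7 h.symm) h6 n45 n46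
    have m1 : v1 ∈ V3 := by
      rcases mem v1 with h | h | h
      · exact absurd (adjV1 v1 w1 h h4) w1n2
      · exact absurd h v1n2
      · exact h
    have m4 : w1 ∈ V3 := by
      rcases mem w1 with h | h | h
      · exact absurd (adjV1 w1 v1 h h4.symm) v1n2
      · exact absurd h w1n2
      · exact h
    have nv : ∀ y : V, ¬G.Adj v1 y → y ∉ V2 := fun y hny hy => hny (h32 v1 m1 y hy)
    have nw : ∀ y : V, ¬G.Adj w1 y → y ∉ V2 := fun y hny hy => hny (h32 w1 m4 y hy)
    have m2 : v2 ∈ V3 := by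
      rcases mem v2 with h | h | h
      · exact absurd (adjV1 v2 v3 h h2) (nv v3 (fun hh => h3 hh.symm))
      · exact absurd h (nv v2 h1)
      · exact h
    have m3 : v3 ∈ V3 := by
      rcases mem v3 with h | h | h
      · exact absurd (adjV1 v3 v2 h h2.symm) (nv v2 h1)
      · exact absurd h (nv v3 (fun hh => h3 hh.symm))
      · exact h
    have m5 : w2 ∈ V3 := by
      rcases mem w2 with h | h | h
      · exact absurd (adjV1 w2 w3 h h6) (nw w3 (fun hh => h7 hh.symm))
      · exact absurd h (nw w2 h5)
      · exact h
    have m6 : w3 ∈ V3 := by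
      rcases mem w3 with h | h | h
      · exact absurd (adjV1 w3 w2 h h6.symm) (nw w2 h5)
      · exact absurd h (nw w3 (fun hh => h7 hh.symm))
      · exact h
    exact build m1 m2 m3 m4 m5 m6
end

section
/- If d = (d_1, …, d_n) is a threshold sequence, i.e., a graphic list with exactly one realization (exactly one simple graph on vertex set {1,…,n} in which each vertex i has degree d_i), then P(d) consists of a single point. -/
open Finset

section ThresholdAux

set_option linter.unusedSectionVars false
set_option maxHeartbeats 1000000

variable {V : Type} [Fintype V] [DecidableEq V]

/-- No 2-switch configuration. -/
def No2Switch (G : SimpleGraph V) : Prop :=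
  ∀ a b c d : V, G.Adj a b → G.Adj c d → ¬G.Adj a d → ¬G.Adj c b →
    a ≠ d → b ≠ c → False

lemma ncard_swap {s : Set V} {p q : V} (hp : p ∈ s) (hq : q ∉ s) :
    (insert q (s \ {p})).ncard = s.ncard := by
  have h1 : q ∉ s \ {p} := fun h => hq h.1
  rw [Set.ncard_insert_of_notMem h1 (Set.toFinite _),
    Set.ncard_diff_singleton_of_mem hp]
  have : 0 < s.ncard := (Set.ncard_pos (Set.toFinite _)).mpr ⟨p, hp⟩
  omega

lemma no2switch_of_unique {G : SimpleGraph V}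
    (hu : ∀ H : SimpleGraph V,
      (∀ i, {j | H.Adj i j}.ncard = {j | G.Adj i j}.ncard) → H = G) :
    No2Switch G := by
  intro a b c d hab hcd had hcb hAD hBC
  have hAB : a ≠ b := hab.ne
  have hCD : c ≠ d := hcd.ne
  have hAC : a ≠ c := fun h => had (h ▸ hcd)
  have hBD : b ≠ d := fun h => had (h ▸ hab : G.Adj a d)
  set r : V → V → Prop := fun x y =>
    (G.Adj x y ∧ ¬(x = a ∧ y = b) ∧ ¬(x = b ∧ y = a) ∧ ¬(x = c ∧ y = d) ∧
      ¬(x = d ∧ y = c)) ∨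
    (x = a ∧ y = d) ∨ (x = d ∧ y = a) ∨ (x = c ∧ y = b) ∨ (x = b ∧ y = c)
    with hr
  have hsymm : Symmetric r := by
    intro x y hxy
    rcases hxy with ⟨h1, h2⟩ | h | h | h | h
    · exact Or.inl ⟨h1.symm, by tauto⟩
    all_goals tauto
  have hloop : Irreflexive r := by
    intro x hx
    rcases hx with ⟨h1, _⟩ | ⟨h1, h2⟩ | ⟨h1, h2⟩ | ⟨h1, h2⟩ | ⟨h1, h2⟩
    · exact G.loopless.irrefl x h1
    · exact hAD (h1.symm.trans h2)
    · exact hAD (h2.symm.trans h1)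
    · exact hBC (h2.symm.trans h1)
    · exact hBC (h1.symm.trans h2)
  set G2 : SimpleGraph V := ⟨r, ⟨fun a b h => hsymm h⟩, ⟨hloop⟩⟩ with hG2
  have hNa : {j | G2.Adj a j} = insert d ({j | G.Adj a j} \ {b}) := by
    ext j
    simp only [SimpleGraph.Adj, hG2, hr, Set.mem_setOf_eq, Set.mem_insert_iff,
      Set.mem_diff, Set.mem_singleton_iff, eq_self_iff_true, true_and, and_true]
    constructor
    · rintro (⟨h1, h2, _, _, _⟩ | h | ⟨h1, h2⟩ | ⟨h1, h2⟩ | ⟨h1, h2⟩) <;> tauto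
    · rintro (h | ⟨h1, h2⟩)
      · exact Or.inr (Or.inl h)
      · exact Or.inl ⟨h1, by tauto⟩
  have hNb : {j | G2.Adj b j} = insert c ({j | G.Adj b j} \ {a}) := by
    ext j
    simp only [SimpleGraph.Adj, hG2, hr, Set.mem_setOf_eq, Set.mem_insert_iff,
      Set.mem_diff, Set.mem_singleton_iff, eq_self_iff_true, true_and, and_true]
    constructor
    · rintro (⟨h1, h2, h3, _, _⟩ | ⟨h1, h2⟩ | ⟨h1, h2⟩ | ⟨h1, h2⟩ | h) <;> tauto
    · rintro (h | ⟨h1, h2⟩)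
      · tauto
      · exact Or.inl ⟨h1, by tauto⟩
  have hNc : {j | G2.Adj c j} = insert b ({j | G.Adj c j} \ {d}) := by
    ext j
    simp only [SimpleGraph.Adj, hG2, hr, Set.mem_setOf_eq, Set.mem_insert_iff,
      Set.mem_diff, Set.mem_singleton_iff, eq_self_iff_true, true_and, and_true]
    constructor
    · rintro (⟨h1, h2, h3, h4, _⟩ | ⟨h1, h2⟩ | ⟨h1, h2⟩ | h | ⟨h1, h2⟩) <;> tauto
    · rintro (h | ⟨h1, h2⟩)
      · tauto
      · exact Or.inl ⟨h1, by tauto⟩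
  have hNd : {j | G2.Adj d j} = insert a ({j | G.Adj d j} \ {c}) := by
    ext j
    simp only [SimpleGraph.Adj, hG2, hr, Set.mem_setOf_eq, Set.mem_insert_iff,
      Set.mem_diff, Set.mem_singleton_iff, eq_self_iff_true, true_and, and_true]
    constructor
    · rintro (⟨h1, h2, h3, h4, h5⟩ | ⟨h1, h2⟩ | h | ⟨h1, h2⟩ | ⟨h1, h2⟩) <;> tauto
    · rintro (h | ⟨h1, h2⟩)
      · tauto
      · exact Or.inl ⟨h1, by tauto⟩
  have hNo : ∀ i, i ≠ a → i ≠ b → i ≠ c → i ≠ d →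
      {j | G2.Adj i j} = {j | G.Adj i j} := by
    intro i h1 h2 h3 h4
    ext j
    simp only [SimpleGraph.Adj, hG2, hr, Set.mem_setOf_eq]
    tauto
  have hdeg : ∀ i, {j | G2.Adj i j}.ncard = {j | G.Adj i j}.ncard := by
    intro i
    by_cases h1 : i = a
    · subst h1; rw [hNa]; exact ncard_swap hab had
    by_cases h2 : i = b
    · subst h2
      rw [hNb]
      exact ncard_swap hab.symm (fun h => hcb h.symm)
    by_cases h3 : i = c
    · subst h3; rw [hNc]; exact ncard_swap hcd hcb
    by_cases h4 : i = d
    · subst h4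
      rw [hNd]
      exact ncard_swap hcd.symm (fun h => had h.symm)
    · rw [hNo i h1 h2 h3 h4]
  have hGG : G2 = G := hu G2 hdeg
  have : G2.Adj a d := Or.inr (Or.inl ⟨rfl, rfl⟩)
  rw [hGG] at this
  exact had this

lemma comparable_of_no2switch {G : SimpleGraph V} (h : No2Switch G) (u w : V) :
    (∀ z, G.Adj u z → z ≠ w → G.Adj w z) ∨
    (∀ z, G.Adj w z → z ≠ u → G.Adj u z) := by
  by_contra hc
  push_neg at hc
  obtain ⟨⟨p, hup, hpw, hwp⟩, ⟨q, hwq, hqu, huq⟩⟩ := hc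
  exact h u p w q hup hwq huq hwp (Ne.symm hqu) hpw

lemma exists_dom_or_iso {G : SimpleGraph V} [Nonempty V] (h : No2Switch G) :
    ∃ v : V, (∀ u, u ≠ v → G.Adj v u) ∨ (∀ u, ¬G.Adj v u) := by
  by_cases hiso : ∃ v : V, ∀ u, ¬G.Adj v u
  · obtain ⟨v, hv⟩ := hiso
    exact ⟨v, Or.inr hv⟩
  push_neg at hiso
  obtain ⟨u, hu, hmax⟩ := Finset.exists_max_image Finset.univ
    (fun v => {j | G.Adj v j}.ncard) Finset.univ_nonempty
  refine ⟨u, Or.inl ?_⟩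
  intro w hw
  by_contra huw
  have hw' : w ≠ u := hw
  obtain ⟨z0, hz0⟩ := hiso w
  have hz0u : z0 ≠ u := fun hh => huw (hh ▸ hz0).symm
  obtain ⟨z, huz, hwz⟩ : ∃ z, G.Adj u z ∧ G.Adj w z := by
    rcases comparable_of_no2switch h u w with hc | hc
    · obtain ⟨z1, hz1⟩ := hiso u
      have : z1 ≠ w := fun hh => huw (hh ▸ hz1)
      exact ⟨z1, hz1, (hc z1 hz1 this).symm.symm⟩
    · exact ⟨z0, hc z0 hz0 hz0u, hz0⟩
  have hzu : z ≠ u := huz.ne'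
  have hzw : z ≠ w := hwz.ne'
  rcases comparable_of_no2switch h u z with hc | hc
  · have hsub : insert w ({j | G.Adj u j} \ {z}) ⊆ {j | G.Adj z j} \ {u} := by
      intro t ht
      rcases ht with rfl | ⟨ht1, ht2⟩
      · exact ⟨hwz.symm, hw'⟩
      · exact ⟨hc t ht1 ht2, fun hh => G.loopless.irrefl u (hh ▸ ht1)⟩
    have h1 : (insert w ({j | G.Adj u j} \ {z})).ncard ≤
        ({j | G.Adj z j} \ {u}).ncard :=
      Set.ncard_le_ncard hsub (Set.toFinite _)
    have hwnot : w ∉ {j | G.Adj u j} \ {z} := fun hh => huw hh.1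
    rw [Set.ncard_insert_of_notMem hwnot (Set.toFinite _)] at h1
    have e1 : ({j | G.Adj u j} \ {z}).ncard = {j | G.Adj u j}.ncard - 1 :=
      Set.ncard_diff_singleton_of_mem (show z ∈ {j | G.Adj u j} from huz)
    have e2 : ({j | G.Adj z j} \ {u}).ncard = {j | G.Adj z j}.ncard - 1 :=
      Set.ncard_diff_singleton_of_mem (show u ∈ {j | G.Adj z j} from huz.symm)
    have hupos : 0 < {j | G.Adj u j}.ncard :=
      (Set.ncard_pos (Set.toFinite _)).mpr ⟨z, huz⟩
    have hzpos : 0 < {j | G.Adj z j}.ncard :=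
      (Set.ncard_pos (Set.toFinite _)).mpr ⟨u, huz.symm⟩
    have := hmax z (Finset.mem_univ z)
    omega
  · exact huw (hc w hwz.symm hw')

lemma forced_one {ι : Type} (s : Finset ι) (f : ι → ℝ) (h1 : ∀ i ∈ s, f i ≤ 1)
    (hsum : ∑ i ∈ s, f i = s.card) : ∀ i ∈ s, f i = 1 := by
  have h0 : ∑ i ∈ s, (1 - f i) = 0 := by
    rw [Finset.sum_sub_distrib, Finset.sum_const, nsmul_eq_mul, mul_one, hsum,
      sub_self]
  intro i hi
  have := (Finset.sum_eq_zero_iff_of_nonneg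
    (fun i hi => by linarith [h1 i hi])).mp h0 i hi
  linarith

lemma ncard_subtype (v : V) (P : V → Prop) :
    {a : {u : V // u ≠ v} | P a.val}.ncard = {i : V | P i ∧ i ≠ v}.ncard := by
  rw [← Set.ncard_image_of_injective _ (Subtype.val_injective
    (p := fun u : V => u ≠ v))]
  congr 1
  ext i
  constructor
  · rintro ⟨⟨a, ha⟩, hPa, rfl⟩; exact ⟨hPa, ha⟩
  · rintro ⟨hP, hne⟩; exact ⟨⟨i, hne⟩, hP, rfl⟩

lemma sum_subtype_ne (v : V) (f : V → ℝ) :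
    ∑ i : {u : V // u ≠ v}, f i.val = ∑ i, f i - f v := by
  rw [← Finset.sum_subtype (p := fun u : V => u ≠ v) (Finset.univ.erase v)
    (fun x => by simp [Finset.mem_erase]) f]
  have h2 := Finset.sum_erase_add Finset.univ f (Finset.mem_univ v)
  linarith

end ThresholdAux

set_option maxHeartbeats 1000000 in
open scoped Classical in
lemma keyD : ∀ (N : ℕ) (V : Type) [Fintype V] [DecidableEq V] (G : SimpleGraph V),
    Fintype.card V = N → No2Switch G →
    ∀ x : V → V → ℝ, (∀ i j, x i j = x j i) → (∀ i, x i i = 0) →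
    (∀ i j, 0 ≤ x i j ∧ x i j ≤ 1) →
    (∀ j, ∑ i, x i j = ({i | G.Adj i j}.ncard : ℝ)) →
    ∀ i j, x i j = if G.Adj i j then 1 else 0 := by
  intro N
  induction N using Nat.strong_induction_on with
  | _ N ih =>
  intro V _ _ G hcard hno2 x hsymm hdiag hbd hrow
  rcases Nat.eq_zero_or_pos N with h0 | hN
  · subst h0
    intro i j
    exact ((Fintype.card_eq_zero_iff.mp hcard).elim i)
  haveI : Nonempty V := Fintype.card_pos_iff.mp (hcard ▸ hN)
  obtain ⟨v, hv⟩ := exists_dom_or_iso hno2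
  have hcolv : ∀ u, x u v = if G.Adj u v then 1 else 0 := by
    rcases hv with hdom | hiso
    · have hNvc : {i : V | G.Adj i v}.ncard = N - 1 := by
        have hNv : {i : V | G.Adj i v} = ({v} : Set V)ᶜ := by
          ext u
          simp only [Set.mem_setOf_eq, Set.mem_compl_iff, Set.mem_singleton_iff]
          exact ⟨fun h => h.ne, fun h => (hdom u h).symm⟩
        rw [hNv]
        have h2 := Set.ncard_add_ncard_compl ({v} : Set V)
        rw [Set.ncard_singleton, Nat.card_eq_fintype_card, hcard] at h2
        omega
      have hsum : ∑ i ∈ Finset.univ.erase v, x i v = ((N - 1 : ℕ) : ℝ) := by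
        have h3 := Finset.sum_erase_add Finset.univ (fun i => x i v)
          (Finset.mem_univ v)
        simp only [hdiag v, add_zero] at h3
        rw [h3, hrow v, hNvc]
      have hcardE : (Finset.univ.erase v).card = N - 1 := by
        rw [Finset.card_erase_of_mem (Finset.mem_univ v), Finset.card_univ, hcard]
      have hone := forced_one (Finset.univ.erase v) (fun i => x i v)
        (fun i _ => (hbd i v).2) (by rw [hsum, hcardE])
      intro u
      by_cases hu : u = v
      · rw [hu, hdiag, if_neg (G.loopless.irrefl v)]
      · have h1 := hone u (Finset.mem_erase.mpr ⟨hu, Finset.mem_univ u⟩)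
        rw [h1, if_pos ((hdom u hu).symm)]
    · have hNv : {i : V | G.Adj i v} = ∅ := by
        ext u
        simp only [Set.mem_setOf_eq, Set.mem_empty_iff_false, iff_false]
        exact fun h => hiso u h.symm
      have hsum : ∑ i, x i v = 0 := by rw [hrow v, hNv]; simp
      have hzero := (Finset.sum_eq_zero_iff_of_nonneg
        (fun i _ => (hbd i v).1)).mp hsum
      intro u
      have h1 := hzero u (Finset.mem_univ u)
      rw [h1, if_neg (fun h => hiso u h.symm)]
  intro i j
  by_cases hi : i = v
  · rw [hi]
    by_cases hadj : G.Adj v j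
    · rw [hsymm, hcolv j, if_pos hadj.symm, if_pos hadj]
    · rw [hsymm, hcolv j, if_neg (fun h => hadj h.symm), if_neg hadj]
  by_cases hj : j = v
  · rw [hj]; exact hcolv i
  set G' : SimpleGraph {u : V // u ≠ v} := SimpleGraph.comap Subtype.val G
    with hG'
  have hcard' : Fintype.card {u : V // u ≠ v} = N - 1 := by
    simp [Fintype.card_subtype_compl, hcard]
  have hno2' : No2Switch G' := by
    intro a b c d h1 h2 h3 h4 h5 h6
    exact hno2 a b c d h1 h2 h3 h4 (fun hh => h5 (Subtype.ext hh))
      (fun hh => h6 (Subtype.ext hh))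
  have hrow' : ∀ jj : {u : V // u ≠ v},
      ∑ ii : {u : V // u ≠ v}, x ii.val jj.val =
        (({ii : {u : V // u ≠ v} | G'.Adj ii jj}).ncard : ℝ) := by
    intro jj
    have hs := sum_subtype_ne v (fun i => x i jj.val)
    have himg : {ii : {u : V // u ≠ v} | G'.Adj ii jj}.ncard =
        {i : V | G.Adj i jj.val ∧ i ≠ v}.ncard :=
      ncard_subtype v (fun i => G.Adj i jj.val)
    rw [hs, hrow jj.val, himg]
    have hxvj : x v jj.val = if G.Adj v jj.val then 1 else 0 := by
      by_cases hadj : G.Adj v jj.val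
      · rw [hsymm, hcolv jj.val, if_pos hadj.symm, if_pos hadj]
      · rw [hsymm, hcolv jj.val, if_neg (fun h => hadj h.symm), if_neg hadj]
    by_cases hadj : G.Adj v jj.val
    · have hvmem : v ∈ {i : V | G.Adj i jj.val} := hadj
      have hset : {i : V | G.Adj i jj.val ∧ i ≠ v} =
          {i : V | G.Adj i jj.val} \ {v} := by
        ext t
        simp [Set.mem_diff, Set.mem_setOf_eq]
      have hd : {i : V | G.Adj i jj.val ∧ i ≠ v}.ncard =
          {i : V | G.Adj i jj.val}.ncard - 1 := by
        rw [hset]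
        exact Set.ncard_diff_singleton_of_mem hvmem
      have hpos : 0 < {i : V | G.Adj i jj.val}.ncard :=
        (Set.ncard_pos (Set.toFinite _)).mpr ⟨v, hvmem⟩
      rw [hxvj, if_pos hadj, hd, Nat.cast_sub hpos]
      norm_num
    · have hset : {i : V | G.Adj i jj.val ∧ i ≠ v} =
          {i : V | G.Adj i jj.val} := by
        ext t
        simp only [Set.mem_setOf_eq, and_iff_left_iff_imp]
        intro ht
        exact fun hh => hadj (hh ▸ ht)
      rw [hxvj, if_neg hadj, hset, sub_zero]
  have hres := ih (N - 1) (Nat.sub_lt hN Nat.one_pos) {u : V // u ≠ v} G'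
    hcard' hno2' (fun a b => x a.val b.val) (fun a b => hsymm a.val b.val)
    (fun a => hdiag a.val) (fun a b => hbd a.val b.val) hrow' ⟨i, hi⟩ ⟨j, hj⟩
  rw [hres]
  rfl

/-- if `d` is a threshold sequence (unique labeled realization),
then `P(d)` consists of a single point. -/
theorem threshold_polytope_is_singleton {n : ℕ} (d : Fin n → ℕ)
    (h : ∃! G : SimpleGraph (Fin n), IsRealization d G) :
    ∃! x : Fin n → Fin n → ℝ, x ∈ degreePolytope d := by
  classical
  obtain ⟨G, hG, huniq⟩ := h
  have hno2 : No2Switch G := by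
    apply no2switch_of_unique
    intro H hH
    exact huniq H (fun i => (hH i).trans (hG i))
  have hcol : ∀ j, ({i | G.Adj i j}.ncard : ℝ) = (d j : ℝ) := by
    intro j
    have : {i | G.Adj i j} = {i | G.Adj j i} := by
      ext u; exact ⟨fun hh => hh.symm, fun hh => hh.symm⟩
    rw [this, hG j]
  have hsum : ∀ j, ∑ i, (if G.Adj i j then (1 : ℝ) else 0) =
      ({i | G.Adj i j}.ncard : ℝ) := by
    intro j
    rw [Finset.sum_boole]
    congr 1
    rw [Set.ncard_eq_toFinset_card' {i | G.Adj i j}]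
    congr 1
    ext u
    simp
  refine ⟨fun i j => if G.Adj i j then 1 else 0, ?_, ?_⟩
  · refine ⟨?_, ?_, ?_, ?_⟩
    · intro i j
      dsimp only
      by_cases hadj : G.Adj i j
      · rw [if_pos hadj, if_pos hadj.symm]
      · rw [if_neg hadj, if_neg (fun hh => hadj hh.symm)]
    · intro i; dsimp only; rw [if_neg (G.loopless.irrefl i)]
    · intro i j
      dsimp only
      by_cases hadj : G.Adj i j
      · rw [if_pos hadj]; norm_num
      · rw [if_neg hadj]; norm_num
    · intro j
      dsimp only
      rw [hsum j, hcol j]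
  · rintro y ⟨h1, h2, h3, h4⟩
    funext i j
    have := keyD (Fintype.card (Fin n)) (Fin n) G rfl hno2 y h1 h2 h3
      (fun j => by rw [h4 j, hcol j]) i j
    rw [this]
end

section
/- Let H be an indecomposable, B-free simple graph with no induced subgraph isomorphic to any of C_5, P_5, the house graph (the complement of P_5), K_2 + K_3, or K_{2,3}. Suppose a, b, c, d are four distinct vertices of H such that ab and cd are edges and ac, ad, bc, bd are non-edges (so {a,b,c,d} induces 2K_2). Then every vertex of H outside {a,b,c,d} is adjacent to exactly one or exactly three of the vertices a, b, c, d. -/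
open Finset

lemma inj5 {V : Type*} (x0 x1 x2 x3 x4 : V)
    (d01 : x0 ≠ x1) (d02 : x0 ≠ x2) (d03 : x0 ≠ x3) (d04 : x0 ≠ x4)
    (d12 : x1 ≠ x2) (d13 : x1 ≠ x3) (d14 : x1 ≠ x4)
    (d23 : x2 ≠ x3) (d24 : x2 ≠ x4) (d34 : x3 ≠ x4) :
    Function.Injective ![x0, x1, x2, x3, x4] := by
  intro i j h
  fin_cases i <;> fin_cases j <;>
    first
      | rfl
      | exact absurd h d01 | exact absurd h.symm d01
      | exact absurd h d02 | exact absurd h.symm d02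
      | exact absurd h d03 | exact absurd h.symm d03
      | exact absurd h d04 | exact absurd h.symm d04
      | exact absurd h d12 | exact absurd h.symm d12
      | exact absurd h d13 | exact absurd h.symm d13
      | exact absurd h d14 | exact absurd h.symm d14
      | exact absurd h d23 | exact absurd h.symm d23
      | exact absurd h d24 | exact absurd h.symm d24
      | exact absurd h d34 | exact absurd h.symm d34

lemma inj6 {V : Type*} (x0 x1 x2 x3 x4 x5 : V)
    (d01 : x0 ≠ x1) (d02 : x0 ≠ x2) (d03 : x0 ≠ x3) (d04 : x0 ≠ x4) (d05 : x0 ≠ x5)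
    (d12 : x1 ≠ x2) (d13 : x1 ≠ x3) (d14 : x1 ≠ x4) (d15 : x1 ≠ x5)
    (d23 : x2 ≠ x3) (d24 : x2 ≠ x4) (d25 : x2 ≠ x5)
    (d34 : x3 ≠ x4) (d35 : x3 ≠ x5) (d45 : x4 ≠ x5) :
    Function.Injective ![x0, x1, x2, x3, x4, x5] := by
  intro i j h
  fin_cases i <;> fin_cases j <;>
    first
      | rfl
      | exact absurd h d01 | exact absurd h.symm d01
      | exact absurd h d02 | exact absurd h.symm d02
      | exact absurd h d03 | exact absurd h.symm d03
      | exact absurd h d04 | exact absurd h.symm d04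
      | exact absurd h d05 | exact absurd h.symm d05
      | exact absurd h d12 | exact absurd h.symm d12
      | exact absurd h d13 | exact absurd h.symm d13
      | exact absurd h d14 | exact absurd h.symm d14
      | exact absurd h d15 | exact absurd h.symm d15
      | exact absurd h d23 | exact absurd h.symm d23
      | exact absurd h d24 | exact absurd h.symm d24
      | exact absurd h d25 | exact absurd h.symm d25
      | exact absurd h d34 | exact absurd h.symm d34
      | exact absurd h d35 | exact absurd h.symm d35
      | exact absurd h d45 | exact absurd h.symm d45

lemma adj6 {V : Type*} {H : SimpleGraph V} (x0 x1 x2 x3 x4 x5 : V)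
    (A : Fin 6 → Fin 6 → Bool) (hd : ∀ i, A i i = false) (hsym : ∀ i j, A i j = A j i)
    (a01 : H.Adj x0 x1 ↔ A 0 1 = true) (a02 : H.Adj x0 x2 ↔ A 0 2 = true) (a03 : H.Adj x0 x3 ↔ A 0 3 = true) (a04 : H.Adj x0 x4 ↔ A 0 4 = true) (a05 : H.Adj x0 x5 ↔ A 0 5 = true) (a12 : H.Adj x1 x2 ↔ A 1 2 = true) (a13 : H.Adj x1 x3 ↔ A 1 3 = true) (a14 : H.Adj x1 x4 ↔ A 1 4 = true) (a15 : H.Adj x1 x5 ↔ A 1 5 = true) (a23 : H.Adj x2 x3 ↔ A 2 3 = true) (a24 : H.Adj x2 x4 ↔ A 2 4 = true) (a25 : H.Adj x2 x5 ↔ A 2 5 = true) (a34 : H.Adj x3 x4 ↔ A 3 4 = true) (a35 : H.Adj x3 x5 ↔ A 3 5 = true) (a45 : H.Adj x4 x5 ↔ A 4 5 = true) :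
    ∀ i j, H.Adj (![x0, x1, x2, x3, x4, x5] i) (![x0, x1, x2, x3, x4, x5] j) ↔ A i j = true := by
  intro i j
  fin_cases i <;> fin_cases j <;>
    first
      | exact iff_of_false (H.irrefl) (by rw [hd]; exact Bool.false_ne_true)
      | exact a01
      | exact a02
      | exact a03
      | exact a04
      | exact a05
      | exact a12
      | exact a13
      | exact a14
      | exact a15
      | exact a23
      | exact a24
      | exact a25
      | exact a34
      | exact a35
      | exact a45
      | exact (H.adj_comm _ _).trans (a01.trans (by rw [hsym]; exact Iff.rfl))
      | exact (H.adj_comm _ _).trans (a02.trans (by rw [hsym]; exact Iff.rfl))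
      | exact (H.adj_comm _ _).trans (a03.trans (by rw [hsym]; exact Iff.rfl))
      | exact (H.adj_comm _ _).trans (a04.trans (by rw [hsym]; exact Iff.rfl))
      | exact (H.adj_comm _ _).trans (a05.trans (by rw [hsym]; exact Iff.rfl))
      | exact (H.adj_comm _ _).trans (a12.trans (by rw [hsym]; exact Iff.rfl))
      | exact (H.adj_comm _ _).trans (a13.trans (by rw [hsym]; exact Iff.rfl))
      | exact (H.adj_comm _ _).trans (a14.trans (by rw [hsym]; exact Iff.rfl))
      | exact (H.adj_comm _ _).trans (a15.trans (by rw [hsym]; exact Iff.rfl))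
      | exact (H.adj_comm _ _).trans (a23.trans (by rw [hsym]; exact Iff.rfl))
      | exact (H.adj_comm _ _).trans (a24.trans (by rw [hsym]; exact Iff.rfl))
      | exact (H.adj_comm _ _).trans (a25.trans (by rw [hsym]; exact Iff.rfl))
      | exact (H.adj_comm _ _).trans (a34.trans (by rw [hsym]; exact Iff.rfl))
      | exact (H.adj_comm _ _).trans (a35.trans (by rw [hsym]; exact Iff.rfl))
      | exact (H.adj_comm _ _).trans (a45.trans (by rw [hsym]; exact Iff.rfl))

lemma bfree6 {V : Type*} {H : SimpleGraph V} (hB : BFree H)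
    (x : Fin 6 → V) (hinj : Function.Injective x)
    (A : Fin 6 → Fin 6 → Bool)
    (hAdj : ∀ i j, H.Adj (x i) (x j) ↔ A i j = true)
    (hdeg : (Multiset.map (fun i => (Finset.univ.filter (fun j => A i j = true)).card)
      (Finset.univ.val : Multiset (Fin 6))) ∈ BDegSeqs) : False := by
  classical
  set s : Finset V := Finset.map ⟨x, hinj⟩ Finset.univ with hs
  have hcard : s.card = 6 := by simp [hs]
  apply hB s hcard
  have key : ∀ i : Fin 6, {u | u ∈ s ∧ H.Adj (x i) u}.ncard
      = (Finset.univ.filter (fun j => A i j = true)).card := by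
    intro i
    have hset : {u | u ∈ s ∧ H.Adj (x i) u}
        = x '' ↑(Finset.univ.filter (fun j => A i j = true)) := by
      ext u
      simp only [Set.mem_setOf_eq, hs, Finset.mem_map, Finset.mem_univ, true_and,
        Set.mem_image, Finset.coe_filter, Set.mem_setOf_eq, Function.Embedding.coeFn_mk]
      constructor
      · rintro ⟨⟨j, rfl⟩, hadj⟩
        exact ⟨j, (hAdj i j).mp hadj, rfl⟩
      · rintro ⟨j, hj, rfl⟩
        exact ⟨⟨j, rfl⟩, (hAdj i j).mpr hj⟩
    rw [hset, Set.ncard_image_of_injective _ hinj, Set.ncard_coe_finset]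
  have heq : (s.val.map fun v => {u | u ∈ s ∧ H.Adj v u}.ncard)
      = Multiset.map (fun i => (Finset.univ.filter (fun j => A i j = true)).card)
        (Finset.univ.val : Multiset (Fin 6)) := by
    rw [hs, Finset.map_val, Multiset.map_map]
    exact Multiset.map_congr rfl fun i _ => key i
  rw [heq]
  exact hdeg

lemma induce_iso_of_range {V : Type*} (H : SimpleGraph V) (G5 : SimpleGraph (Fin 5))
    (x : Fin 5 → V) (hinj : Function.Injective x)
    (hA : ∀ i j, H.Adj (x i) (x j) ↔ G5.Adj i j) :
    Nonempty (H.induce (Set.range x) ≃g G5) := by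
  refine ⟨⟨(Equiv.ofInjective x hinj).symm, ?_⟩⟩
  intro u v
  have hu : x ((Equiv.ofInjective x hinj).symm u) = ↑u := Equiv.apply_ofInjective_symm hinj u
  have hv : x ((Equiv.ofInjective x hinj).symm v) = ↑v := Equiv.apply_ofInjective_symm hinj v
  constructor
  · intro h
    show H.Adj ↑u ↑v
    rw [← hu, ← hv]
    exact (hA _ _).mpr h
  · intro h
    have h2 : H.Adj (x ((Equiv.ofInjective x hinj).symm u))
        (x ((Equiv.ofInjective x hinj).symm v)) := by rw [hu, hv]; exact h
    exact (hA _ _).mp h2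
lemma p5_contra {V : Type*} (H : SimpleGraph V) (p q r s t : V)
    (npq : p ≠ q) (npr : p ≠ r) (nps : p ≠ s) (npt : p ≠ t)
    (nqr : q ≠ r) (nqs : q ≠ s) (nqt : q ≠ t) (nrs : r ≠ s) (nrt : r ≠ t) (nst : s ≠ t)
    (epq : H.Adj p q) (fpr : ¬H.Adj p r) (fps : ¬H.Adj p s) (fpt : ¬H.Adj p t) (eqr : H.Adj q r) (fqs : ¬H.Adj q s) (fqt : ¬H.Adj q t) (ers : H.Adj r s) (frt : ¬H.Adj r t) (est : H.Adj s t)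
    (hno : ¬Nonempty (H.induce (Set.range ![p, q, r, s, t]) ≃g graphP5)) : False := by
  apply hno
  apply induce_iso_of_range H graphP5 ![p, q, r, s, t]
    (inj5 p q r s t npq npr nps npt nqr nqs nqt nrs nrt nst)
  intro i j
  fin_cases i <;> fin_cases j
  · exact iff_of_false (H.irrefl) (by simp only [graphP5, SimpleGraph.fromRel_adj]; decide)
  · exact iff_of_true (epq) (by simp only [graphP5, SimpleGraph.fromRel_adj]; decide)
  · exact iff_of_false (fpr) (by simp only [graphP5, SimpleGraph.fromRel_adj]; decide)
  · exact iff_of_false (fps) (by simp only [graphP5, SimpleGraph.fromRel_adj]; decide)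
  · exact iff_of_false (fpt) (by simp only [graphP5, SimpleGraph.fromRel_adj]; decide)
  · exact iff_of_true (epq.symm) (by simp only [graphP5, SimpleGraph.fromRel_adj]; decide)
  · exact iff_of_false (H.irrefl) (by simp only [graphP5, SimpleGraph.fromRel_adj]; decide)
  · exact iff_of_true (eqr) (by simp only [graphP5, SimpleGraph.fromRel_adj]; decide)
  · exact iff_of_false (fqs) (by simp only [graphP5, SimpleGraph.fromRel_adj]; decide)
  · exact iff_of_false (fqt) (by simp only [graphP5, SimpleGraph.fromRel_adj]; decide)
  · exact iff_of_false (fun h => fpr h.symm) (by simp only [graphP5, SimpleGraph.fromRel_adj]; decide)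
  · exact iff_of_true (eqr.symm) (by simp only [graphP5, SimpleGraph.fromRel_adj]; decide)
  · exact iff_of_false (H.irrefl) (by simp only [graphP5, SimpleGraph.fromRel_adj]; decide)
  · exact iff_of_true (ers) (by simp only [graphP5, SimpleGraph.fromRel_adj]; decide)
  · exact iff_of_false (frt) (by simp only [graphP5, SimpleGraph.fromRel_adj]; decide)
  · exact iff_of_false (fun h => fps h.symm) (by simp only [graphP5, SimpleGraph.fromRel_adj]; decide)
  · exact iff_of_false (fun h => fqs h.symm) (by simp only [graphP5, SimpleGraph.fromRel_adj]; decide)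
  · exact iff_of_true (ers.symm) (by simp only [graphP5, SimpleGraph.fromRel_adj]; decide)
  · exact iff_of_false (H.irrefl) (by simp only [graphP5, SimpleGraph.fromRel_adj]; decide)
  · exact iff_of_true (est) (by simp only [graphP5, SimpleGraph.fromRel_adj]; decide)
  · exact iff_of_false (fun h => fpt h.symm) (by simp only [graphP5, SimpleGraph.fromRel_adj]; decide)
  · exact iff_of_false (fun h => fqt h.symm) (by simp only [graphP5, SimpleGraph.fromRel_adj]; decide)
  · exact iff_of_false (fun h => frt h.symm) (by simp only [graphP5, SimpleGraph.fromRel_adj]; decide)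
  · exact iff_of_true (est.symm) (by simp only [graphP5, SimpleGraph.fromRel_adj]; decide)
  · exact iff_of_false (H.irrefl) (by simp only [graphP5, SimpleGraph.fromRel_adj]; decide)



lemma k2k3_contra {V : Type*} (H : SimpleGraph V) (p q r s t : V)
    (npq : p ≠ q) (npr : p ≠ r) (nps : p ≠ s) (npt : p ≠ t)
    (nqr : q ≠ r) (nqs : q ≠ s) (nqt : q ≠ t) (nrs : r ≠ s) (nrt : r ≠ t) (nst : s ≠ t)
    (epq : H.Adj p q) (fpr : ¬H.Adj p r) (fps : ¬H.Adj p s) (fpt : ¬H.Adj p t) (fqr : ¬H.Adj q r) (fqs : ¬H.Adj q s) (fqt : ¬H.Adj q t) (ers : H.Adj r s) (ert : H.Adj r t) (est : H.Adj s t)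
    (hno : ¬Nonempty (H.induce (Set.range ![p, q, r, s, t]) ≃g graphK2PlusK3)) : False := by
  apply hno
  apply induce_iso_of_range H graphK2PlusK3 ![p, q, r, s, t]
    (inj5 p q r s t npq npr nps npt nqr nqs nqt nrs nrt nst)
  intro i j
  fin_cases i <;> fin_cases j
  · exact iff_of_false (H.irrefl) (by simp only [graphK2PlusK3, SimpleGraph.fromRel_adj]; decide)
  · exact iff_of_true (epq) (by simp only [graphK2PlusK3, SimpleGraph.fromRel_adj]; decide)
  · exact iff_of_false (fpr) (by simp only [graphK2PlusK3, SimpleGraph.fromRel_adj]; decide)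
  · exact iff_of_false (fps) (by simp only [graphK2PlusK3, SimpleGraph.fromRel_adj]; decide)
  · exact iff_of_false (fpt) (by simp only [graphK2PlusK3, SimpleGraph.fromRel_adj]; decide)
  · exact iff_of_true (epq.symm) (by simp only [graphK2PlusK3, SimpleGraph.fromRel_adj]; decide)
  · exact iff_of_false (H.irrefl) (by simp only [graphK2PlusK3, SimpleGraph.fromRel_adj]; decide)
  · exact iff_of_false (fqr) (by simp only [graphK2PlusK3, SimpleGraph.fromRel_adj]; decide)
  · exact iff_of_false (fqs) (by simp only [graphK2PlusK3, SimpleGraph.fromRel_adj]; decide)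
  · exact iff_of_false (fqt) (by simp only [graphK2PlusK3, SimpleGraph.fromRel_adj]; decide)
  · exact iff_of_false (fun h => fpr h.symm) (by simp only [graphK2PlusK3, SimpleGraph.fromRel_adj]; decide)
  · exact iff_of_false (fun h => fqr h.symm) (by simp only [graphK2PlusK3, SimpleGraph.fromRel_adj]; decide)
  · exact iff_of_false (H.irrefl) (by simp only [graphK2PlusK3, SimpleGraph.fromRel_adj]; decide)
  · exact iff_of_true (ers) (by simp only [graphK2PlusK3, SimpleGraph.fromRel_adj]; decide)
  · exact iff_of_true (ert) (by simp only [graphK2PlusK3, SimpleGraph.fromRel_adj]; decide)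
  · exact iff_of_false (fun h => fps h.symm) (by simp only [graphK2PlusK3, SimpleGraph.fromRel_adj]; decide)
  · exact iff_of_false (fun h => fqs h.symm) (by simp only [graphK2PlusK3, SimpleGraph.fromRel_adj]; decide)
  · exact iff_of_true (ers.symm) (by simp only [graphK2PlusK3, SimpleGraph.fromRel_adj]; decide)
  · exact iff_of_false (H.irrefl) (by simp only [graphK2PlusK3, SimpleGraph.fromRel_adj]; decide)
  · exact iff_of_true (est) (by simp only [graphK2PlusK3, SimpleGraph.fromRel_adj]; decide)
  · exact iff_of_false (fun h => fpt h.symm) (by simp only [graphK2PlusK3, SimpleGraph.fromRel_adj]; decide)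
  · exact iff_of_false (fun h => fqt h.symm) (by simp only [graphK2PlusK3, SimpleGraph.fromRel_adj]; decide)
  · exact iff_of_true (ert.symm) (by simp only [graphK2PlusK3, SimpleGraph.fromRel_adj]; decide)
  · exact iff_of_true (est.symm) (by simp only [graphK2PlusK3, SimpleGraph.fromRel_adj]; decide)
  · exact iff_of_false (H.irrefl) (by simp only [graphK2PlusK3, SimpleGraph.fromRel_adj]; decide)

lemma decomp_aux {V : Type*} (H : SimpleGraph V) (hB : BFree H) (a b c d w : V)
    (hab : H.Adj a b) (hcd : H.Adj c d)
    (hac : ¬H.Adj a c) (had : ¬H.Adj a d) (hbc : ¬H.Adj b c) (hbd : ¬H.Adj b d)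
    (noAB : ∀ v : V, v ≠ a → v ≠ b → v ≠ c → v ≠ d →
      H.Adj v a → H.Adj v b → ¬H.Adj v c → ¬H.Adj v d → False)
    (noCD : ∀ v : V, v ≠ a → v ≠ b → v ≠ c → v ≠ d →
      ¬H.Adj v a → ¬H.Adj v b → H.Adj v c → H.Adj v d → False)
    (noAC : ∀ v : V, v ≠ a → v ≠ b → v ≠ c → v ≠ d →
      H.Adj v a → ¬H.Adj v b → H.Adj v c → ¬H.Adj v d → False)
    (noAD : ∀ v : V, v ≠ a → v ≠ b → v ≠ c → v ≠ d →
      H.Adj v a → ¬H.Adj v b → ¬H.Adj v c → H.Adj v d → False)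
    (noBC : ∀ v : V, v ≠ a → v ≠ b → v ≠ c → v ≠ d →
      ¬H.Adj v a → H.Adj v b → H.Adj v c → ¬H.Adj v d → False)
    (noBD : ∀ v : V, v ≠ a → v ≠ b → v ≠ c → v ≠ d →
      ¬H.Adj v a → H.Adj v b → ¬H.Adj v c → H.Adj v d → False)
    (hw : (H.Adj w a ∧ H.Adj w b ∧ H.Adj w c ∧ H.Adj w d) ∨
      (¬H.Adj w a ∧ ¬H.Adj w b ∧ ¬H.Adj w c ∧ ¬H.Adj w d)) :
    Decomposable H := by
  classical
  have nab : a ≠ b := H.ne_of_adj hab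
  have ncd : c ≠ d := H.ne_of_adj hcd
  have nac : a ≠ c := by rintro rfl; exact had hcd
  have nad : a ≠ d := by rintro rfl; exact hac hcd.symm
  have nbc : b ≠ c := by rintro rfl; exact hbd hcd
  have nbd : b ≠ d := by rintro rfl; exact hbc hcd.symm
  refine ⟨{v | ¬H.Adj v a ∧ ¬H.Adj v b ∧ ¬H.Adj v c ∧ ¬H.Adj v d},
    {v | H.Adj v a ∧ H.Adj v b ∧ H.Adj v c ∧ H.Adj v d},
    ({v | ¬H.Adj v a ∧ ¬H.Adj v b ∧ ¬H.Adj v c ∧ ¬H.Adj v d} ∪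
      {v | H.Adj v a ∧ H.Adj v b ∧ H.Adj v c ∧ H.Adj v d})ᶜ,
    ⟨Set.union_compl_self _, ?_, ?_, ?_, ?_, ?_, ?_, ?_⟩, ?_, ?_⟩
  · rw [Set.disjoint_left]
    rintro v ⟨h1, _⟩ ⟨h1', _⟩
    exact h1 h1'
  · exact disjoint_compl_right.mono_left Set.subset_union_left
  · exact disjoint_compl_right.mono_left Set.subset_union_right
  · -- IndepOn V1
    rintro u ⟨hua, hub, huc, hud⟩ y ⟨hya, hyb, hyc, hyd⟩ hadj
    have hu : ¬H.Adj u a ∧ ¬H.Adj u b ∧ ¬H.Adj u c ∧ ¬H.Adj u d := ⟨hua, hub, huc, hud⟩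
    have hy : ¬H.Adj y a ∧ ¬H.Adj y b ∧ ¬H.Adj y c ∧ ¬H.Adj y d := ⟨hya, hyb, hyc, hyd⟩
    have nuy : u ≠ y := H.ne_of_adj hadj
    have nua : u ≠ a := by rintro rfl; exact hu.2.1 hab
    have nub : u ≠ b := by rintro rfl; exact hu.1 hab.symm
    have nuc : u ≠ c := by rintro rfl; exact hu.2.2.2 hcd
    have nud : u ≠ d := by rintro rfl; exact hu.2.2.1 hcd.symm
    have nya : y ≠ a := by rintro rfl; exact hy.2.1 hab
    have nyb : y ≠ b := by rintro rfl; exact hy.1 hab.symm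
    have nyc : y ≠ c := by rintro rfl; exact hy.2.2.2 hcd
    have nyd : y ≠ d := by rintro rfl; exact hy.2.2.1 hcd.symm

    exact bfree6 (H := H) hB _ (inj6 u y a b c d (nuy) (nua) (nub) (nuc) (nud) (nya) (nyb) (nyc) (nyd) (nab) (nac) (nad) (nbc) (nbd) (ncd)) (![![false, true, false, false, false, false], ![true, false, false, false, false, false], ![false, false, false, true, false, false], ![false, false, true, false, false, false], ![false, false, false, false, false, true], ![false, false, false, false, true, false]] : Fin 6 → Fin 6 → Bool)
      (adj6 u y a b c d (![![false, true, false, false, false, false], ![true, false, false, false, false, false], ![false, false, false, true, false, false], ![false, false, true, false, false, false], ![false, false, false, false, false, true], ![false, false, false, false, true, false]] : Fin 6 → Fin 6 → Bool) (by decide) (by decide) (iff_of_true (hadj) (by decide)) (iff_of_false (hu.1) (by decide)) (iff_of_false (hu.2.1) (by decide)) (iff_of_false (hu.2.2.1) (by decide)) (iff_of_false (hu.2.2.2) (by decide)) (iff_of_false (hy.1) (by decide)) (iff_of_false (hy.2.1) (by decide)) (iff_of_false (hy.2.2.1) (by decide)) (iff_of_false (hy.2.2.2) (by decide)) (iff_of_true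 (hab) (by decide)) (iff_of_false (hac) (by decide)) (iff_of_false (had) (by decide)) (iff_of_false (hbc) (by decide)) (iff_of_false (hbd) (by decide)) (iff_of_true (hcd) (by decide)))
      (by simp only [BDegSeqs, Set.mem_insert_iff, Set.mem_singleton_iff]; decide)
  · -- CliqueOn V2
    rintro u ⟨hua, hub, huc, hud⟩ y ⟨hya, hyb, hyc, hyd⟩ hne
    by_contra hadj
    have hu : H.Adj u a ∧ H.Adj u b ∧ H.Adj u c ∧ H.Adj u d := ⟨hua, hub, huc, hud⟩
    have hy : H.Adj y a ∧ H.Adj y b ∧ H.Adj y c ∧ H.Adj y d := ⟨hya, hyb, hyc, hyd⟩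
    have nua : u ≠ a := by rintro rfl; exact H.irrefl hu.1
    have nub : u ≠ b := by rintro rfl; exact H.irrefl hu.2.1
    have nuc : u ≠ c := by rintro rfl; exact H.irrefl hu.2.2.1
    have nud : u ≠ d := by rintro rfl; exact H.irrefl hu.2.2.2
    have nya : y ≠ a := by rintro rfl; exact H.irrefl hy.1
    have nyb : y ≠ b := by rintro rfl; exact H.irrefl hy.2.1
    have nyc : y ≠ c := by rintro rfl; exact H.irrefl hy.2.2.1
    have nyd : y ≠ d := by rintro rfl; exact H.irrefl hy.2.2.2

    exact bfree6 (H := H) hB _ (inj6 u y a b c d (hne) (nua) (nub) (nuc) (nud) (nya) (nyb) (nyc) (nyd) (nab) (nac) (nad) (nbc) (nbd) (ncd)) (![![false, false, true, true, true, true], ![false, false, true, true, true, true], ![true, true, false, true, false, false], ![true, true, true, false, false, false], ![true, true, false, false, false, true], ![true, true, false, false, true, false]] : Fin 6 → Fin 6 → Bool)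
      (adj6 u y a b c d (![![false, false, true, true, true, true], ![false, false, true, true, true, true], ![true, true, false, true, false, false], ![true, true, true, false, false, false], ![true, true, false, false, false, true], ![true, true, false, false, true, false]] : Fin 6 → Fin 6 → Bool) (by decide) (by decide) (iff_of_false (hadj) (by decide)) (iff_of_true (hu.1) (by decide)) (iff_of_true (hu.2.1) (by decide)) (iff_of_true (hu.2.2.1) (by decide)) (iff_of_true (hu.2.2.2) (by decide)) (iff_of_true (hy.1) (by decide)) (iff_of_true (hy.2.1) (by decide)) (iff_of_true (hy.2.2.1) (by decide)) (iff_of_true (hy.2.2.2) (by decide)) (iff_of_true (hab) (by decide)) (iff_of_false (hac) (by decide)) (iff_of_false (had) (by decide)) (iff_of_false (hbc) (by decide)) (iff_of_false (hbd) (by decide)) (iff_of_true (hcd) (by decide)))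
      (by simp only [BDegSeqs, Set.mem_insert_iff, Set.mem_singleton_iff]; decide)
  · -- V3 → V2 all adjacent
    intro v hv u hu'
    have hu : H.Adj u a ∧ H.Adj u b ∧ H.Adj u c ∧ H.Adj u d := hu'
    by_contra hadj
    simp only [Set.mem_compl_iff, Set.mem_union, Set.mem_setOf_eq, not_or] at hv
    obtain ⟨hv1, hv2⟩ := hv
    rcases eq_or_ne v a with rfl | hva
    · exact hadj hu.1.symm
    rcases eq_or_ne v b with rfl | hvb
    · exact hadj hu.2.1.symm
    rcases eq_or_ne v c with rfl | hvc
    · exact hadj hu.2.2.1.symm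
    rcases eq_or_ne v d with rfl | hvd
    · exact hadj hu.2.2.2.symm
    have nvu : v ≠ u := by rintro rfl; exact hv2 hu
    have nua : u ≠ a := by rintro rfl; exact H.irrefl hu.1
    have nub : u ≠ b := by rintro rfl; exact H.irrefl hu.2.1
    have nuc : u ≠ c := by rintro rfl; exact H.irrefl hu.2.2.1
    have nud : u ≠ d := by rintro rfl; exact H.irrefl hu.2.2.2
    by_cases p1 : H.Adj v a <;> by_cases p2 : H.Adj v b <;> by_cases p3 : H.Adj v c <;> by_cases p4 : H.Adj v d
    · exact hv2 ⟨p1, p2, p3, p4⟩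
    · exact bfree6 (H := H) hB _ (inj6 v u a b c d (nvu) (hva) (hvb) (hvc) (hvd) (nua) (nub) (nuc) (nud) (nab) (nac) (nad) (nbc) (nbd) (ncd)) (![![false, false, true, true, true, false], ![false, false, true, true, true, true], ![true, true, false, true, false, false], ![true, true, true, false, false, false], ![true, true, false, false, false, true], ![false, true, false, false, true, false]] : Fin 6 → Fin 6 → Bool)
        (adj6 v u a b c d (![![false, false, true, true, true, false], ![false, false, true, true, true, true], ![true, true, false, true, false, false], ![true, true, true, false, false, false], ![true, true, false, false, false, true], ![false, true, false, false, true, false]] : Fin 6 → Fin 6 → Bool) (by decide) (by decide) (iff_of_false (hadj) (by decide)) (iff_of_true (p1) (by decide)) (iff_of_true (p2) (by decide)) (iff_of_true (p3) (by decide)) (iff_of_false (p4) (by decide)) (iff_of_true (hu.1) (by decide)) (iff_of_true (hu.2.1) (by decide)) (iff_of_true (hu.2.2.1) (by decide)) (iff_of_true (hu.2.2.2) (by decide)) (iff_of_true (hab) (by decide)) (iff_of_false (hac) (by decide)) (iff_of_false (had) (by decide)) (iff_of_false (hbc) (by decide)) (iff_of_false (hbd) (by decide)) (iff_of_true (hcd)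 (by decide)))
        (by simp only [BDegSeqs, Set.mem_insert_iff, Set.mem_singleton_iff]; decide)
    · exact bfree6 (H := H) hB _ (inj6 v u a b c d (nvu) (hva) (hvb) (hvc) (hvd) (nua) (nub) (nuc) (nud) (nab) (nac) (nad) (nbc) (nbd) (ncd)) (![![false, false, true, true, false, true], ![false, false, true, true, true, true], ![true, true, false, true, false, false], ![true, true, true, false, false, false], ![false, true, false, false, false, true], ![true, true, false, false, true, false]] : Fin 6 → Fin 6 → Bool)
        (adj6 v u a b c d (![![false, false, true, true, false, true], ![false, false, true, true, true, true], ![true, true, false, true, false, false], ![true, true, true, false, false, false], ![false, true, false, false, false, true], ![true, true, false, false, true, false]] : Fin 6 → Fin 6 → Bool) (by decide) (by decide) (iff_of_false (hadj) (by decide)) (iff_of_true (p1) (by decide)) (iff_of_true (p2) (by decide)) (iff_of_false (p3) (by decide)) (iff_of_true (p4) (by decide)) (iff_of_true (hu.1) (by decide)) (iff_of_true (hu.2.1) (by decide)) (iff_of_true (hu.2.2.1) (by decide)) (iff_of_true (hu.2.2.2) (by decide)) (iff_of_true (hab) (by decide)) (iff_of_false (hac) (by decide)) (iff_of_false (had)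 (by decide)) (iff_of_false (hbc) (by decide)) (iff_of_false (hbd) (by decide)) (iff_of_true (hcd) (by decide)))
        (by simp only [BDegSeqs, Set.mem_insert_iff, Set.mem_singleton_iff]; decide)
    · exact noAB v hva hvb hvc hvd p1 p2 p3 p4
    · exact bfree6 (H := H) hB _ (inj6 v u a b c d (nvu) (hva) (hvb) (hvc) (hvd) (nua) (nub) (nuc) (nud) (nab) (nac) (nad) (nbc) (nbd) (ncd)) (![![false, false, true, false, true, true], ![false, false, true, true, true, true], ![true, true, false, true, false, false], ![false, true, true, false, false, false], ![true, true, false, false, false, true], ![true, true, false, false, true, false]] : Fin 6 → Fin 6 → Bool)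
        (adj6 v u a b c d (![![false, false, true, false, true, true], ![false, false, true, true, true, true], ![true, true, false, true, false, false], ![false, true, true, false, false, false], ![true, true, false, false, false, true], ![true, true, false, false, true, false]] : Fin 6 → Fin 6 → Bool) (by decide) (by decide) (iff_of_false (hadj) (by decide)) (iff_of_true (p1) (by decide)) (iff_of_false (p2) (by decide)) (iff_of_true (p3) (by decide)) (iff_of_true (p4) (by decide)) (iff_of_true (hu.1) (by decide)) (iff_of_true (hu.2.1) (by decide)) (iff_of_true (hu.2.2.1) (by decide)) (iff_of_true (hu.2.2.2) (by decide)) (iff_of_true (hab) (by decide)) (iff_of_false (hac) (by decide)) (iff_of_false (had) (by decide)) (iff_of_false (hbc) (by decide)) (iff_of_false (hbd) (by decide)) (iff_of_true (hcd) (by decide)))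
        (by simp only [BDegSeqs, Set.mem_insert_iff, Set.mem_singleton_iff]; decide)
    · exact noAC v hva hvb hvc hvd p1 p2 p3 p4
    · exact noAD v hva hvb hvc hvd p1 p2 p3 p4
    · exact bfree6 (H := H) hB _ (inj6 v u a b c d (nvu) (hva) (hvb) (hvc) (hvd) (nua) (nub) (nuc) (nud) (nab) (nac) (nad) (nbc) (nbd) (ncd)) (![![false, false, true, false, false, false], ![false, false, true, true, true, true], ![true, true, false, true, false, false], ![false, true, true, false, false, false], ![false, true, false, false, false, true], ![false, true, false, false, true, false]] : Fin 6 → Fin 6 → Bool)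
        (adj6 v u a b c d (![![false, false, true, false, false, false], ![false, false, true, true, true, true], ![true, true, false, true, false, false], ![false, true, true, false, false, false], ![false, true, false, false, false, true], ![false, true, false, false, true, false]] : Fin 6 → Fin 6 → Bool) (by decide) (by decide) (iff_of_false (hadj) (by decide)) (iff_of_true (p1) (by decide)) (iff_of_false (p2) (by decide)) (iff_of_false (p3) (by decide)) (iff_of_false (p4) (by decide)) (iff_of_true (hu.1) (by decide)) (iff_of_true (hu.2.1) (by decide)) (iff_of_true (hu.2.2.1) (by decide)) (iff_of_true (hu.2.2.2) (by decide)) (iff_of_true (hab) (by decide)) (iff_of_false (hac) (by decide)) (iff_of_false (had) (by decide)) (iff_of_false (hbc) (by decide)) (iff_of_false (hbd) (by decide)) (iff_of_true (hcd) (by decide)))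
        (by simp only [BDegSeqs, Set.mem_insert_iff, Set.mem_singleton_iff]; decide)
    · exact bfree6 (H := H) hB _ (inj6 v u a b c d (nvu) (hva) (hvb) (hvc) (hvd) (nua) (nub) (nuc) (nud) (nab) (nac) (nad) (nbc) (nbd) (ncd)) (![![false, false, false, true, true, true], ![false, false, true, true, true, true], ![false, true, false, true, false, false], ![true, true, true, false, false, false], ![true, true, false, false, false, true], ![true, true, false, false, true, false]] : Fin 6 → Fin 6 → Bool)
        (adj6 v u a b c d (![![false, false, false, true, true, true], ![false, false, true, true, true, true], ![false, true, false, true, false, false], ![true, true, true, false, false, false], ![true, true, false, false, false, true], ![true, true, false, false, true, false]] : Fin 6 → Fin 6 → Bool) (by decide) (by decide) (iff_of_false (hadj) (by decide)) (iff_of_false (p1) (by decide)) (iff_of_true (p2) (by decide)) (iff_of_true (p3) (by decide)) (iff_of_true (p4) (by decide)) (iff_of_true (hu.1) (by decide)) (iff_of_true (hu.2.1) (by decide)) (iff_of_true (hu.2.2.1) (by decide)) (iff_of_true (hu.2.2.2) (by decide)) (iff_of_true (hab) (by decide)) (iff_of_false (hac) (by decide)) (iff_of_false (had) (by decide)) (iff_of_false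 (hbc) (by decide)) (iff_of_false (hbd) (by decide)) (iff_of_true (hcd) (by decide)))
        (by simp only [BDegSeqs, Set.mem_insert_iff, Set.mem_singleton_iff]; decide)
    · exact noBC v hva hvb hvc hvd p1 p2 p3 p4
    · exact noBD v hva hvb hvc hvd p1 p2 p3 p4
    · exact bfree6 (H := H) hB _ (inj6 v u a b c d (nvu) (hva) (hvb) (hvc) (hvd) (nua) (nub) (nuc) (nud) (nab) (nac) (nad) (nbc) (nbd) (ncd)) (![![false, false, false, true, false, false], ![false, false, true, true, true, true], ![false, true, false, true, false, false], ![true, true, true, false, false, false], ![false, true, false, false, false, true], ![false, true, false, false, true, false]] : Fin 6 → Fin 6 → Bool)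
        (adj6 v u a b c d (![![false, false, false, true, false, false], ![false, false, true, true, true, true], ![false, true, false, true, false, false], ![true, true, true, false, false, false], ![false, true, false, false, false, true], ![false, true, false, false, true, false]] : Fin 6 → Fin 6 → Bool) (by decide) (by decide) (iff_of_false (hadj) (by decide)) (iff_of_false (p1) (by decide)) (iff_of_true (p2) (by decide)) (iff_of_false (p3) (by decide)) (iff_of_false (p4) (by decide)) (iff_of_true (hu.1) (by decide)) (iff_of_true (hu.2.1) (by decide)) (iff_of_true (hu.2.2.1) (by decide)) (iff_of_true (hu.2.2.2) (by decide)) (iff_of_true (hab) (by decide)) (iff_of_false (hac) (by decide)) (iff_of_false (had) (by decide)) (iff_of_false (hbc) (by decide)) (iff_of_false (hbd) (by decide)) (iff_of_true (hcd) (by decide)))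
        (by simp only [BDegSeqs, Set.mem_insert_iff, Set.mem_singleton_iff]; decide)
    · exact noCD v hva hvb hvc hvd p1 p2 p3 p4
    · exact bfree6 (H := H) hB _ (inj6 v u a b c d (nvu) (hva) (hvb) (hvc) (hvd) (nua) (nub) (nuc) (nud) (nab) (nac) (nad) (nbc) (nbd) (ncd)) (![![false, false, false, false, true, false], ![false, false, true, true, true, true], ![false, true, false, true, false, false], ![false, true, true, false, false, false], ![true, true, false, false, false, true], ![false, true, false, false, true, false]] : Fin 6 → Fin 6 → Bool)
        (adj6 v u a b c d (![![false, false, false, false, true, false], ![false, false, true, true, true, true], ![false, true, false, true, false, false], ![false, true, true, false, false, false], ![true, true, false, false, false, true], ![false, true, false, false, true, false]] : Fin 6 → Fin 6 → Bool) (by decide) (by decide) (iff_of_false (hadj) (by decide)) (iff_of_false (p1) (by decide)) (iff_of_false (p2) (by decide)) (iff_of_true (p3) (by decide)) (iff_of_false (p4) (by decide)) (iff_of_true (hu.1) (by decide)) (iff_of_true (hu.2.1) (by decide)) (iff_of_true (hu.2.2.1) (by decide)) (iff_of_true (hu.2.2.2) (by decide)) (iff_of_true (hab) (by decide)) (iff_of_false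 (hac) (by decide)) (iff_of_false (had) (by decide)) (iff_of_false (hbc) (by decide)) (iff_of_false (hbd) (by decide)) (iff_of_true (hcd) (by decide)))
        (by simp only [BDegSeqs, Set.mem_insert_iff, Set.mem_singleton_iff]; decide)
    · exact bfree6 (H := H) hB _ (inj6 v u a b c d (nvu) (hva) (hvb) (hvc) (hvd) (nua) (nub) (nuc) (nud) (nab) (nac) (nad) (nbc) (nbd) (ncd)) (![![false, false, false, false, false, true], ![false, false, true, true, true, true], ![false, true, false, true, false, false], ![false, true, true, false, false, false], ![false, true, false, false, false, true], ![true, true, false, false, true, false]] : Fin 6 → Fin 6 → Bool)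
        (adj6 v u a b c d (![![false, false, false, false, false, true], ![false, false, true, true, true, true], ![false, true, false, true, false, false], ![false, true, true, false, false, false], ![false, true, false, false, false, true], ![true, true, false, false, true, false]] : Fin 6 → Fin 6 → Bool) (by decide) (by decide) (iff_of_false (hadj) (by decide)) (iff_of_false (p1) (by decide)) (iff_of_false (p2) (by decide)) (iff_of_false (p3) (by decide)) (iff_of_true (p4) (by decide)) (iff_of_true (hu.1) (by decide)) (iff_of_true (hu.2.1) (by decide)) (iff_of_true (hu.2.2.1) (by decide)) (iff_of_true (hu.2.2.2) (by decide)) (iff_of_true (hab) (by decide)) (iff_of_false (hac) (by decide)) (iff_of_false (had) (by decide)) (iff_of_false (hbc) (by decide)) (iff_of_false (hbd) (by decide)) (iff_of_true (hcd) (by decide)))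
        (by simp only [BDegSeqs, Set.mem_insert_iff, Set.mem_singleton_iff]; decide)
    · exact hv1 ⟨p1, p2, p3, p4⟩
  · -- V3 → V1 none adjacent
    intro v hv y hy'
    have hy : ¬H.Adj y a ∧ ¬H.Adj y b ∧ ¬H.Adj y c ∧ ¬H.Adj y d := hy'
    intro hadj
    simp only [Set.mem_compl_iff, Set.mem_union, Set.mem_setOf_eq, not_or] at hv
    obtain ⟨hv1, hv2⟩ := hv
    rcases eq_or_ne v a with rfl | hva
    · exact hy.1 hadj.symm
    rcases eq_or_ne v b with rfl | hvb
    · exact hy.2.1 hadj.symm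
    rcases eq_or_ne v c with rfl | hvc
    · exact hy.2.2.1 hadj.symm
    rcases eq_or_ne v d with rfl | hvd
    · exact hy.2.2.2 hadj.symm
    have nvy : v ≠ y := by rintro rfl; exact hv1 hy
    have nya : y ≠ a := by rintro rfl; exact hy.2.1 hab
    have nyb : y ≠ b := by rintro rfl; exact hy.1 hab.symm
    have nyc : y ≠ c := by rintro rfl; exact hy.2.2.2 hcd
    have nyd : y ≠ d := by rintro rfl; exact hy.2.2.1 hcd.symm
    by_cases p1 : H.Adj v a <;> by_cases p2 : H.Adj v b <;> by_cases p3 : H.Adj v c <;> by_cases p4 : H.Adj v d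
    · exact hv2 ⟨p1, p2, p3, p4⟩
    · exact bfree6 (H := H) hB _ (inj6 v y a b c d (nvy) (hva) (hvb) (hvc) (hvd) (nya) (nyb) (nyc) (nyd) (nab) (nac) (nad) (nbc) (nbd) (ncd)) (![![false, true, true, true, true, false], ![true, false, false, false, false, false], ![true, false, false, true, false, false], ![true, false, true, false, false, false], ![true, false, false, false, false, true], ![false, false, false, false, true, false]] : Fin 6 → Fin 6 → Bool)
        (adj6 v y a b c d (![![false, true, true, true, true, false], ![true, false, false, false, false, false], ![true, false, false, true, false, false], ![true, false, true, false, false, false], ![true, false, false, false, false, true], ![false, false, false, false, true, false]] : Fin 6 → Fin 6 → Bool) (by decide) (by decide) (iff_of_true (hadj) (by decide)) (iff_of_true (p1) (by decide)) (iff_of_true (p2) (by decide)) (iff_of_true (p3) (by decide)) (iff_of_false (p4) (by decide)) (iff_of_false (hy.1) (by decide)) (iff_of_false (hy.2.1) (by decide)) (iff_of_false (hy.2.2.1) (by decide)) (iff_of_false (hy.2.2.2) (by decide)) (iff_of_true (hab) (by decide)) (iff_of_false (hac) (by decide)) (iff_of_false (had) (by decide)) (iff_of_false (hbc) (by decide))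 (iff_of_false (hbd) (by decide)) (iff_of_true (hcd) (by decide)))
        (by simp only [BDegSeqs, Set.mem_insert_iff, Set.mem_singleton_iff]; decide)
    · exact bfree6 (H := H) hB _ (inj6 v y a b c d (nvy) (hva) (hvb) (hvc) (hvd) (nya) (nyb) (nyc) (nyd) (nab) (nac) (nad) (nbc) (nbd) (ncd)) (![![false, true, true, true, false, true], ![true, false, false, false, false, false], ![true, false, false, true, false, false], ![true, false, true, false, false, false], ![false, false, false, false, false, true], ![true, false, false, false, true, false]] : Fin 6 → Fin 6 → Bool)
        (adj6 v y a b c d (![![false, true, true, true, false, true], ![true, false, false, false, false, false], ![true, false, false, true, false, false], ![true, false, true, false, false, false], ![false, false, false, false, false, true], ![true, false, false, false, true, false]] : Fin 6 → Fin 6 → Bool) (by decide) (by decide) (iff_of_true (hadj) (by decide)) (iff_of_true (p1) (by decide)) (iff_of_true (p2) (by decide)) (iff_of_false (p3) (by decide)) (iff_of_true (p4) (by decide)) (iff_of_false (hy.1) (by decide)) (iff_of_false (hy.2.1) (by decide)) (iff_of_false (hy.2.2.1) (by decide)) (iff_of_false (hy.2.2.2) (by decide)) (iff_of_true (hab) (by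 decide)) (iff_of_false (hac) (by decide)) (iff_of_false (had) (by decide)) (iff_of_false (hbc) (by decide)) (iff_of_false (hbd) (by decide)) (iff_of_true (hcd) (by decide)))
        (by simp only [BDegSeqs, Set.mem_insert_iff, Set.mem_singleton_iff]; decide)
    · exact noAB v hva hvb hvc hvd p1 p2 p3 p4
    · exact bfree6 (H := H) hB _ (inj6 v y a b c d (nvy) (hva) (hvb) (hvc) (hvd) (nya) (nyb) (nyc) (nyd) (nab) (nac) (nad) (nbc) (nbd) (ncd)) (![![false, true, true, false, true, true], ![true, false, false, false, false, false], ![true, false, false, true, false, false], ![false, false, true, false, false, false], ![true, false, false, false, false, true], ![true, false, false, false, true, false]] : Fin 6 → Fin 6 → Bool)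
        (adj6 v y a b c d (![![false, true, true, false, true, true], ![true, false, false, false, false, false], ![true, false, false, true, false, false], ![false, false, true, false, false, false], ![true, false, false, false, false, true], ![true, false, false, false, true, false]] : Fin 6 → Fin 6 → Bool) (by decide) (by decide) (iff_of_true (hadj) (by decide)) (iff_of_true (p1) (by decide)) (iff_of_false (p2) (by decide)) (iff_of_true (p3) (by decide)) (iff_of_true (p4) (by decide)) (iff_of_false (hy.1) (by decide)) (iff_of_false (hy.2.1) (by decide)) (iff_of_false (hy.2.2.1) (by decide)) (iff_of_false (hy.2.2.2) (by decide)) (iff_of_true (hab) (by decide)) (iff_of_false (hac) (by decide)) (iff_of_false (had) (by decide)) (iff_of_false (hbc) (by decide)) (iff_of_false (hbd) (by decide)) (iff_of_true (hcd) (by decide)))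
        (by simp only [BDegSeqs, Set.mem_insert_iff, Set.mem_singleton_iff]; decide)
    · exact noAC v hva hvb hvc hvd p1 p2 p3 p4
    · exact noAD v hva hvb hvc hvd p1 p2 p3 p4
    · exact bfree6 (H := H) hB _ (inj6 v y a b c d (nvy) (hva) (hvb) (hvc) (hvd) (nya) (nyb) (nyc) (nyd) (nab) (nac) (nad) (nbc) (nbd) (ncd)) (![![false, true, true, false, false, false], ![true, false, false, false, false, false], ![true, false, false, true, false, false], ![false, false, true, false, false, false], ![false, false, false, false, false, true], ![false, false, false, false, true, false]] : Fin 6 → Fin 6 → Bool)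
        (adj6 v y a b c d (![![false, true, true, false, false, false], ![true, false, false, false, false, false], ![true, false, false, true, false, false], ![false, false, true, false, false, false], ![false, false, false, false, false, true], ![false, false, false, false, true, false]] : Fin 6 → Fin 6 → Bool) (by decide) (by decide) (iff_of_true (hadj) (by decide)) (iff_of_true (p1) (by decide)) (iff_of_false (p2) (by decide)) (iff_of_false (p3) (by decide)) (iff_of_false (p4) (by decide)) (iff_of_false (hy.1) (by decide)) (iff_of_false (hy.2.1) (by decide)) (iff_of_false (hy.2.2.1) (by decide)) (iff_of_false (hy.2.2.2) (by decide)) (iff_of_true (hab) (by decide)) (iff_of_false (hac) (by decide)) (iff_of_false (had) (by decide)) (iff_of_false (hbc) (by decide)) (iff_of_false (hbd) (by decide)) (iff_of_true (hcd) (by decide)))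
        (by simp only [BDegSeqs, Set.mem_insert_iff, Set.mem_singleton_iff]; decide)
    · exact bfree6 (H := H) hB _ (inj6 v y a b c d (nvy) (hva) (hvb) (hvc) (hvd) (nya) (nyb) (nyc) (nyd) (nab) (nac) (nad) (nbc) (nbd) (ncd)) (![![false, true, false, true, true, true], ![true, false, false, false, false, false], ![false, false, false, true, false, false], ![true, false, true, false, false, false], ![true, false, false, false, false, true], ![true, false, false, false, true, false]] : Fin 6 → Fin 6 → Bool)
        (adj6 v y a b c d (![![false, true, false, true, true, true], ![true, false, false, false, false, false], ![false, false, false, true, false, false], ![true, false, true, false, false, false], ![true, false, false, false, false, true], ![true, false, false, false, true, false]] : Fin 6 → Fin 6 → Bool) (by decide) (by decide) (iff_of_true (hadj) (by decide)) (iff_of_false (p1) (by decide)) (iff_of_true (p2) (by decide)) (iff_of_true (p3) (by decide)) (iff_of_true (p4) (by decide)) (iff_of_false (hy.1) (by decide)) (iff_of_false (hy.2.1) (by decide)) (iff_of_false (hy.2.2.1) (by decide)) (iff_of_false (hy.2.2.2) (by decide)) (iff_of_true (hab) (by decide)) (iff_of_false (hac) (by decide)) (iff_of_false (had) (by decide))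 (iff_of_false (hbc) (by decide)) (iff_of_false (hbd) (by decide)) (iff_of_true (hcd) (by decide)))
        (by simp only [BDegSeqs, Set.mem_insert_iff, Set.mem_singleton_iff]; decide)
    · exact noBC v hva hvb hvc hvd p1 p2 p3 p4
    · exact noBD v hva hvb hvc hvd p1 p2 p3 p4
    · exact bfree6 (H := H) hB _ (inj6 v y a b c d (nvy) (hva) (hvb) (hvc) (hvd) (nya) (nyb) (nyc) (nyd) (nab) (nac) (nad) (nbc) (nbd) (ncd)) (![![false, true, false, true, false, false], ![true, false, false, false, false, false], ![false, false, false, true, false, false], ![true, false, true, false, false, false], ![false, false, false, false, false, true], ![false, false, false, false, true, false]] : Fin 6 → Fin 6 → Bool)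
        (adj6 v y a b c d (![![false, true, false, true, false, false], ![true, false, false, false, false, false], ![false, false, false, true, false, false], ![true, false, true, false, false, false], ![false, false, false, false, false, true], ![false, false, false, false, true, false]] : Fin 6 → Fin 6 → Bool) (by decide) (by decide) (iff_of_true (hadj) (by decide)) (iff_of_false (p1) (by decide)) (iff_of_true (p2) (by decide)) (iff_of_false (p3) (by decide)) (iff_of_false (p4) (by decide)) (iff_of_false (hy.1) (by decide)) (iff_of_false (hy.2.1) (by decide)) (iff_of_false (hy.2.2.1) (by decide)) (iff_of_false (hy.2.2.2) (by decide)) (iff_of_true (hab) (by decide)) (iff_of_false (hac) (by decide)) (iff_of_false (had) (by decide)) (iff_of_false (hbc) (by decide)) (iff_of_false (hbd) (by decide)) (iff_of_true (hcd) (by decide)))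
        (by simp only [BDegSeqs, Set.mem_insert_iff, Set.mem_singleton_iff]; decide)
    · exact noCD v hva hvb hvc hvd p1 p2 p3 p4
    · exact bfree6 (H := H) hB _ (inj6 v y a b c d (nvy) (hva) (hvb) (hvc) (hvd) (nya) (nyb) (nyc) (nyd) (nab) (nac) (nad) (nbc) (nbd) (ncd)) (![![false, true, false, false, true, false], ![true, false, false, false, false, false], ![false, false, false, true, false, false], ![false, false, true, false, false, false], ![true, false, false, false, false, true], ![false, false, false, false, true, false]] : Fin 6 → Fin 6 → Bool)
        (adj6 v y a b c d (![![false, true, false, false, true, false], ![true, false, false, false, false, false], ![false, false, false, true, false, false], ![false, false, true, false, false, false], ![true, false, false, false, false, true], ![false, false, false, false, true, false]] : Fin 6 → Fin 6 → Bool) (by decide) (by decide) (iff_of_true (hadj) (by decide)) (iff_of_false (p1) (by decide)) (iff_of_false (p2) (by decide)) (iff_of_true (p3) (by decide)) (iff_of_false (p4) (by decide)) (iff_of_false (hy.1) (by decide)) (iff_of_false (hy.2.1) (by decide)) (iff_of_false (hy.2.2.1) (by decide)) (iff_of_false (hy.2.2.2) (by decide)) (iff_of_true (hab) (by decide)) (iff_of_false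 (hac) (by decide)) (iff_of_false (had) (by decide)) (iff_of_false (hbc) (by decide)) (iff_of_false (hbd) (by decide)) (iff_of_true (hcd) (by decide)))
        (by simp only [BDegSeqs, Set.mem_insert_iff, Set.mem_singleton_iff]; decide)
    · exact bfree6 (H := H) hB _ (inj6 v y a b c d (nvy) (hva) (hvb) (hvc) (hvd) (nya) (nyb) (nyc) (nyd) (nab) (nac) (nad) (nbc) (nbd) (ncd)) (![![false, true, false, false, false, true], ![true, false, false, false, false, false], ![false, false, false, true, false, false], ![false, false, true, false, false, false], ![false, false, false, false, false, true], ![true, false, false, false, true, false]] : Fin 6 → Fin 6 → Bool)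
        (adj6 v y a b c d (![![false, true, false, false, false, true], ![true, false, false, false, false, false], ![false, false, false, true, false, false], ![false, false, true, false, false, false], ![false, false, false, false, false, true], ![true, false, false, false, true, false]] : Fin 6 → Fin 6 → Bool) (by decide) (by decide) (iff_of_true (hadj) (by decide)) (iff_of_false (p1) (by decide)) (iff_of_false (p2) (by decide)) (iff_of_false (p3) (by decide)) (iff_of_true (p4) (by decide)) (iff_of_false (hy.1) (by decide)) (iff_of_false (hy.2.1) (by decide)) (iff_of_false (hy.2.2.1) (by decide)) (iff_of_false (hy.2.2.2) (by decide)) (iff_of_true (hab) (by decide)) (iff_of_false (hac) (by decide)) (iff_of_false (had) (by decide)) (iff_of_false (hbc) (by decide)) (iff_of_false (hbd) (by decide)) (iff_of_true (hcd) (by decide)))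
        (by simp only [BDegSeqs, Set.mem_insert_iff, Set.mem_singleton_iff]; decide)
    · exact hv1 ⟨p1, p2, p3, p4⟩
  · -- V1 ∪ V2 nonempty
    rcases hw with h | h
    · exact ⟨w, Or.inr h⟩
    · exact ⟨w, Or.inl h⟩
  · -- V3 nonempty
    refine ⟨a, ?_⟩
    simp only [Set.mem_compl_iff, Set.mem_union, Set.mem_setOf_eq, not_or]
    exact ⟨fun h => h.2.1 hab, fun h => H.irrefl h.1⟩

/-- in an indecomposable `B`-free graph with no induced `C_5`, `P_5`,
house, `K_2 + K_3`, or `K_{2,3}`, every vertex outside an induced `2K_2`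
on `{a,b,c,d}` is adjacent to exactly one or exactly three of `a, b, c, d`. -/
theorem neighbors_of_induced_2K2 {V : Type*} [Fintype V]
    (H : SimpleGraph V) (hind : Indecomposable H) (hB : BFree H)
    (h5free : ∀ s : Set V, ¬Nonempty (H.induce s ≃g graphC5) ∧
      ¬Nonempty (H.induce s ≃g graphP5) ∧ ¬Nonempty (H.induce s ≃g graphHouse) ∧
      ¬Nonempty (H.induce s ≃g graphK2PlusK3) ∧ ¬Nonempty (H.induce s ≃g graphK23))
    (a b c d : V) (hdist : [a, b, c, d].Pairwise (· ≠ ·))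
    (hab : H.Adj a b) (hcd : H.Adj c d)
    (hac : ¬H.Adj a c) (had : ¬H.Adj a d) (hbc : ¬H.Adj b c) (hbd : ¬H.Adj b d) :
    ∀ w : V, w ∉ ({a, b, c, d} : Set V) →
      {x ∈ ({a, b, c, d} : Set V) | H.Adj w x}.ncard = 1 ∨
      {x ∈ ({a, b, c, d} : Set V) | H.Adj w x}.ncard = 3 := by  classical
  intro w hw
  simp only [Set.mem_insert_iff, Set.mem_singleton_iff, not_or] at hw
  obtain ⟨nwa, nwb, nwc, nwd⟩ := hw
  have nab : a ≠ b := H.ne_of_adj hab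
  have ncd : c ≠ d := H.ne_of_adj hcd
  have nac : a ≠ c := by rintro rfl; exact had hcd
  have nad : a ≠ d := by rintro rfl; exact hac hcd.symm
  have nbc : b ≠ c := by rintro rfl; exact hbd hcd
  have nbd : b ≠ d := by rintro rfl; exact hbc hcd.symm
  have noAB : ∀ v : V, v ≠ a → v ≠ b → v ≠ c → v ≠ d →
      H.Adj v a → H.Adj v b → ¬H.Adj v c → ¬H.Adj v d → False := by
    intro v va vb vc vd h1 h2 h3 h4
    exact k2k3_contra H c d v a b ncd vc.symm nac.symm nbc.symm vd.symm nad.symm nbd.symm va vb nab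
      hcd (fun h => h3 h.symm) (fun h => hac h.symm) (fun h => hbc h.symm)
      (fun h => h4 h.symm) (fun h => had h.symm) (fun h => hbd h.symm)
      h1 h2 hab ((h5free _).2.2.2.1)
  have noCD : ∀ v : V, v ≠ a → v ≠ b → v ≠ c → v ≠ d →
      ¬H.Adj v a → ¬H.Adj v b → H.Adj v c → H.Adj v d → False := by
    intro v va vb vc vd h1 h2 h3 h4
    exact k2k3_contra H a b v c d nab va.symm nac nad vb.symm nbc nbd vc vd ncd
      hab (fun h => h1 h.symm) hac had (fun h => h2 h.symm) hbc hbd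
      h3 h4 hcd ((h5free _).2.2.2.1)
  have noAC : ∀ v : V, v ≠ a → v ≠ b → v ≠ c → v ≠ d →
      H.Adj v a → ¬H.Adj v b → H.Adj v c → ¬H.Adj v d → False := by
    intro v va vb vc vd h1 h2 h3 h4
    exact p5_contra H b a v c d nab.symm vb.symm nbc nbd va.symm nac nad vc vd ncd
      hab.symm (fun h => h2 h.symm) hbc hbd h1.symm hac had h3 h4 hcd
      ((h5free _).2.1)
  have noAD : ∀ v : V, v ≠ a → v ≠ b → v ≠ c → v ≠ d →
      H.Adj v a → ¬H.Adj v b → ¬H.Adj v c → H.Adj v d → False := by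
    intro v va vb vc vd h1 h2 h3 h4
    exact p5_contra H b a v d c nab.symm vb.symm nbd nbc va.symm nad nac vd vc ncd.symm
      hab.symm (fun h => h2 h.symm) hbd hbc h1.symm had hac h4 h3 hcd.symm
      ((h5free _).2.1)
  have noBC : ∀ v : V, v ≠ a → v ≠ b → v ≠ c → v ≠ d →
      ¬H.Adj v a → H.Adj v b → H.Adj v c → ¬H.Adj v d → False := by
    intro v va vb vc vd h1 h2 h3 h4
    exact p5_contra H a b v c d nab va.symm nac nad vb.symm nbc nbd vc vd ncd
      hab (fun h => h1 h.symm) hac had h2.symm hbc hbd h3 h4 hcd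
      ((h5free _).2.1)
  have noBD : ∀ v : V, v ≠ a → v ≠ b → v ≠ c → v ≠ d →
      ¬H.Adj v a → H.Adj v b → ¬H.Adj v c → H.Adj v d → False := by
    intro v va vb vc vd h1 h2 h3 h4
    exact p5_contra H a b v d c nab va.symm nad nac vb.symm nbd nbc vd vc ncd.symm
      hab (fun h => h1 h.symm) had hac h2.symm hbd hbc h4 h3 hcd.symm
      ((h5free _).2.1)
  by_cases h1 : H.Adj w a <;> by_cases h2 : H.Adj w b <;>
    by_cases h3 : H.Adj w c <;> by_cases h4 : H.Adj w d
  · exact absurd (decomp_aux H hB a b c d w hab hcd hac had hbc hbd noAB noCD noAC noAD noBC noBD (Or.inl ⟨h1, h2, h3, h4⟩)) hind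
  · right
    have hset : {x ∈ ({a, b, c, d} : Set V) | H.Adj w x} = {a, b, c} := by
      ext x
      simp only [Set.mem_sep_iff, Set.mem_setOf_eq, Set.mem_insert_iff, Set.mem_singleton_iff]
      constructor
      · rintro ⟨(rfl | rfl | rfl | rfl), hx⟩ <;> tauto
      · rintro (rfl | rfl | rfl) <;> exact ⟨by tauto, by assumption⟩
    rw [hset]
    exact Set.ncard_eq_three.mpr ⟨a, b, c, nab, nac, nbc, rfl⟩
  · right
    have hset : {x ∈ ({a, b, c, d} : Set V) | H.Adj w x} = {a, b, d} := by
      ext x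
      simp only [Set.mem_sep_iff, Set.mem_setOf_eq, Set.mem_insert_iff, Set.mem_singleton_iff]
      constructor
      · rintro ⟨(rfl | rfl | rfl | rfl), hx⟩ <;> tauto
      · rintro (rfl | rfl | rfl) <;> exact ⟨by tauto, by assumption⟩
    rw [hset]
    exact Set.ncard_eq_three.mpr ⟨a, b, d, nab, nad, nbd, rfl⟩
  · exact (noAB w nwa nwb nwc nwd h1 h2 h3 h4).elim
  · right
    have hset : {x ∈ ({a, b, c, d} : Set V) | H.Adj w x} = {a, c, d} := by
      ext x
      simp only [Set.mem_sep_iff, Set.mem_setOf_eq, Set.mem_insert_iff, Set.mem_singleton_iff]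
      constructor
      · rintro ⟨(rfl | rfl | rfl | rfl), hx⟩ <;> tauto
      · rintro (rfl | rfl | rfl) <;> exact ⟨by tauto, by assumption⟩
    rw [hset]
    exact Set.ncard_eq_three.mpr ⟨a, c, d, nac, nad, ncd, rfl⟩
  · exact (noAC w nwa nwb nwc nwd h1 h2 h3 h4).elim
  · exact (noAD w nwa nwb nwc nwd h1 h2 h3 h4).elim
  · left
    have hset : {x ∈ ({a, b, c, d} : Set V) | H.Adj w x} = {a} := by
      ext x
      simp only [Set.mem_sep_iff, Set.mem_setOf_eq, Set.mem_insert_iff, Set.mem_singleton_iff]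
      constructor
      · rintro ⟨(rfl | rfl | rfl | rfl), hx⟩ <;> tauto
      · rintro rfl
        exact ⟨by tauto, by assumption⟩
    rw [hset]
    exact Set.ncard_singleton _
  · right
    have hset : {x ∈ ({a, b, c, d} : Set V) | H.Adj w x} = {b, c, d} := by
      ext x
      simp only [Set.mem_sep_iff, Set.mem_setOf_eq, Set.mem_insert_iff, Set.mem_singleton_iff]
      constructor
      · rintro ⟨(rfl | rfl | rfl | rfl), hx⟩ <;> tauto
      · rintro (rfl | rfl | rfl) <;> exact ⟨by tauto, by assumption⟩
    rw [hset]
    exact Set.ncard_eq_three.mpr ⟨b, c, d, nbc, nbd, ncd, rfl⟩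
  · exact (noBC w nwa nwb nwc nwd h1 h2 h3 h4).elim
  · exact (noBD w nwa nwb nwc nwd h1 h2 h3 h4).elim
  · left
    have hset : {x ∈ ({a, b, c, d} : Set V) | H.Adj w x} = {b} := by
      ext x
      simp only [Set.mem_sep_iff, Set.mem_setOf_eq, Set.mem_insert_iff, Set.mem_singleton_iff]
      constructor
      · rintro ⟨(rfl | rfl | rfl | rfl), hx⟩ <;> tauto
      · rintro rfl
        exact ⟨by tauto, by assumption⟩
    rw [hset]
    exact Set.ncard_singleton _
  · exact (noCD w nwa nwb nwc nwd h1 h2 h3 h4).elim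
  · left
    have hset : {x ∈ ({a, b, c, d} : Set V) | H.Adj w x} = {c} := by
      ext x
      simp only [Set.mem_sep_iff, Set.mem_setOf_eq, Set.mem_insert_iff, Set.mem_singleton_iff]
      constructor
      · rintro ⟨(rfl | rfl | rfl | rfl), hx⟩ <;> tauto
      · rintro rfl
        exact ⟨by tauto, by assumption⟩
    rw [hset]
    exact Set.ncard_singleton _
  · left
    have hset : {x ∈ ({a, b, c, d} : Set V) | H.Adj w x} = {d} := by
      ext x
      simp only [Set.mem_sep_iff, Set.mem_setOf_eq, Set.mem_insert_iff, Set.mem_singleton_iff]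
      constructor
      · rintro ⟨(rfl | rfl | rfl | rfl), hx⟩ <;> tauto
      · rintro rfl
        exact ⟨by tauto, by assumption⟩
    rw [hset]
    exact Set.ncard_singleton _
  · exact absurd (decomp_aux H hB a b c d w hab hcd hac had hbc hbd noAB noCD noAC noAD noBC noBD (Or.inr ⟨h1, h2, h3, h4⟩)) hind
end
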